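/- arXiv:2503.10430 — 7 statements merged into one kernel-verified Lean document; each statement's English description precedes it below -/
import Mathlib

section
/- Let U be a nonempty open set witnessing the open set condition for F, i.e. the images f_1(U),…,f_m(U) are pairwise disjoint subsets of U. Then the dynamical boundary B(A) is disjoint from U, i.e. B(A) ∩ U = ∅. -/
open Set
open scoped RealInnerProductSpace

noncomputable section

/-- Points of Euclidean space `ℝ^d`. -/
abbrev Pt (d : ℕ) := EuclideanSpace ℝ (Fin d)

/-- For a word `w = w₁…w_k`, the map `f_w = f_{w₁} ∘ ⋯ ∘ f_{w_k}`. -/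
def fWord {d m : ℕ} (f : Fin m → Pt d → Pt d) (w : List (Fin m)) : Pt d → Pt d :=
  w.foldr (fun j g => f j ∘ g) id

/-- The union of all boundary sets `A ∩ f_w⁻¹(f_v(A))`, over words `v, w` of equal
length `k ≥ 1` whose first letters differ. -/
def boundaryUnion {d m : ℕ} (f : Fin m → Pt d → Pt d) (A : Set (Pt d)) : Set (Pt d) :=
  {x | ∃ v w : List (Fin m), v ≠ [] ∧ v.length = w.length ∧ v.head? ≠ w.head? ∧
        x ∈ A ∩ fWord f w ⁻¹' (fWord f v '' A)}

/-- The dynamical boundary `B(A)`: the closure of the union of all boundary sets. -/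
def dynBoundary {d m : ℕ} (f : Fin m → Pt d → Pt d) (A : Set (Pt d)) : Set (Pt d) :=
  closure (boundaryUnion f A)

/-- A distance-preserving self-map of a finite-dimensional real inner product space
fixing the origin is surjective. -/
lemma surj_of_dist {E : Type*} [NormedAddCommGroup E] [InnerProductSpace ℝ E]
    [FiniteDimensional ℝ E] (h : E → E) (hd : ∀ x y, dist (h x) (h y) = dist x y)
    (h0 : h 0 = 0) : Function.Surjective h := by
  have hn : ∀ x, ‖h x‖ = ‖x‖ := fun x => by
    simpa [h0, dist_eq_norm] using hd x 0
  have hi : ∀ x y : E, inner ℝ (h x) (h y) = inner ℝ x y := by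
    intro x y
    have h1 := norm_sub_sq_real (h x) (h y)
    have h2 := norm_sub_sq_real x y
    have h3 : ‖h x - h y‖ = ‖x - y‖ := by simpa [dist_eq_norm] using hd x y
    rw [h3, hn, hn] at h1; linarith
  have hadd : ∀ x y, h (x + y) = h x + h y := by
    intro x y
    have hz : inner ℝ (h (x+y) - (h x + h y)) (h (x+y) - (h x + h y)) = 0 := by
      have c1 := real_inner_comm x y
      have c2 := real_inner_comm (x + y) x
      have c3 := real_inner_comm (x + y) y
      simp only [inner_sub_left, inner_sub_right, inner_add_left, inner_add_right, hi] at *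
      linarith
    have := inner_self_eq_zero.mp hz
    have : h (x + y) - (h x + h y) = 0 := this
    linear_combination (norm := abel) this
  have hsmul : ∀ (c : ℝ) (x : E), h (c • x) = c • h x := by
    intro c x
    have hz : inner ℝ (h (c • x) - c • h x) (h (c • x) - c • h x) = 0 := by
      simp only [inner_sub_left, inner_sub_right, real_inner_smul_left,
        real_inner_smul_right, hi]
      ring
    have := inner_self_eq_zero.mp hz
    linear_combination (norm := abel) this
  let L : E →ₗ[ℝ] E := { toFun := h, map_add' := hadd, map_smul' := hsmul }
  have hinj : Function.Injective L := by
    intro x y hxy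
    have : dist (h x) (h y) = 0 := by simp [show h x = h y from hxy]
    rw [hd] at this
    exact dist_eq_zero.mp this
  exact LinearMap.surjective_of_injective hinj

/-- If `U` is a nonempty open set witnessing the open set condition for `F`, then the
dynamical boundary `B(A)` is disjoint from `U`: `B(A) ∩ U = ∅`. -/
theorem dynBoundary_inter_osc_set_eq_empty
    {d m : ℕ} (hm : 2 ≤ m) (f : Fin m → Pt d → Pt d) (r : Fin m → ℝ)
    (hr0 : ∀ j, 0 < r j) (hr1 : ∀ j, r j < 1)
    (hf : ∀ j x y, dist (f j x) (f j y) = r j * dist x y)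
    (A : Set (Pt d)) (hAne : A.Nonempty) (hAc : IsCompact A)
    (hA : A = ⋃ j, f j '' A)
    (U : Set (Pt d)) (hUne : U.Nonempty) (hUo : IsOpen U)
    (hUsub : ∀ j, f j '' U ⊆ U)
    (hUdisj : ∀ i j, i ≠ j → Disjoint (f i '' U) (f j '' U)) :
    dynBoundary f A ∩ U = ∅ := by
  have hmpos : 0 < m := by omega
  -- continuity of f j
  have hcont : ∀ j, Continuous (f j) := by
    intro j
    have : LipschitzWith (Real.toNNReal (r j)) (f j) :=
      LipschitzWith.of_dist_le_mul fun x y => by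
        rw [hf, Real.coe_toNNReal _ (hr0 j).le]
    exact this.continuous
  -- surjectivity of f j
  have hsurj : ∀ j, Function.Surjective (f j) := by
    intro j
    set h : Pt d → Pt d := fun x => (r j)⁻¹ • (f j x - f j 0) with hh
    have hd : ∀ x y, dist (h x) (h y) = dist x y := by
      intro x y
      have hxy : h x - h y = (r j)⁻¹ • (f j x - f j y) := by
        simp only [hh]
        rw [← smul_sub]
        congr 1
        abel
      rw [dist_eq_norm, hxy, norm_smul, Real.norm_eq_abs,
        abs_of_pos (inv_pos.mpr (hr0 j)), ← dist_eq_norm, hf,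
        inv_mul_cancel_left₀ (hr0 j).ne']
    have h0 : h 0 = 0 := by simp [hh]
    have hs := surj_of_dist h hd h0
    intro y
    obtain ⟨x, hx⟩ := hs ((r j)⁻¹ • (y - f j 0))
    refine ⟨x, ?_⟩
    have := smul_right_injective (Pt d) (inv_ne_zero (hr0 j).ne') hx
    have : f j x - f j 0 = y - f j 0 := this
    linear_combination (norm := abel) this
  -- f j is an open map
  have hopen : ∀ j, IsOpenMap (f j) := by
    intro j
    intro V hV
    rw [Metric.isOpen_iff]
    rintro y ⟨x, hxV, rfl⟩
    obtain ⟨ε, hε, hball⟩ := Metric.isOpen_iff.mp hV x hxV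
    refine ⟨r j * ε, mul_pos (hr0 j) hε, ?_⟩
    intro z hz
    obtain ⟨x', rfl⟩ := hsurj j z
    refine ⟨x', hball ?_, rfl⟩
    rw [Metric.mem_ball] at hz ⊢
    rw [hf] at hz
    exact lt_of_mul_lt_mul_left (by linarith [hz]) (hr0 j).le
  -- closure U is invariant
  have hclos : ∀ j, f j '' closure U ⊆ closure U := by
    intro j
    calc f j '' closure U ⊆ closure (f j '' U) := image_closure_subset_closure_image (hcont j)
    _ ⊆ closure U := closure_mono (hUsub j)
  -- A ⊆ closure U
  obtain ⟨c, hcU⟩ := hUne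
  have hcC : c ∈ closure U := subset_closure hcU
  obtain ⟨M, hM⟩ := hAc.isBounded.subset_closedBall c
  haveI : Nonempty (Fin m) := ⟨⟨0, hmpos⟩⟩
  set ρ : ℝ := (Finset.univ.sup' (Finset.univ_nonempty (α := Fin m)) r) with hρ
  have hρ1 : ρ < 1 := by
    rw [hρ, Finset.sup'_lt_iff]
    intro j _; exact hr1 j
  have hρj : ∀ j, r j ≤ ρ := fun j => Finset.le_sup' r (Finset.mem_univ j)
  have hρ0 : 0 < ρ := lt_of_lt_of_le (hr0 ⟨0, hmpos⟩) (hρj _)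
  have key : ∀ k : ℕ, ∀ a ∈ A, ∃ p ∈ closure U, dist a p ≤ ρ ^ k * M := by
    intro k
    induction k with
    | zero =>
      intro a ha
      exact ⟨c, hcC, by simpa using hM ha⟩
    | succ k ih =>
      intro a ha
      rw [hA] at ha
      simp only [mem_iUnion] at ha
      obtain ⟨j, a', ha', rfl⟩ := ha
      obtain ⟨p', hp', hdp'⟩ := ih a' ha'
      refine ⟨f j p', hclos j ⟨p', hp', rfl⟩, ?_⟩
      rw [hf]
      calc r j * dist a' p' ≤ ρ * (ρ ^ k * M) := by
            apply mul_le_mul (hρj j) hdp' dist_nonneg hρ0.le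
      _ = ρ ^ (k + 1) * M := by ring
  have hAclos : A ⊆ closure U := by
    intro a ha
    have : a ∈ closure (closure U) := by
      rw [Metric.mem_closure_iff]
      intro ε hε
      have hM0 : (0:ℝ) ≤ M := le_trans dist_nonneg (by simpa using hM ha)
      obtain ⟨k, hk⟩ := exists_pow_lt_of_lt_one (show (0:ℝ) < ε / (M + 1) by positivity) hρ1
      obtain ⟨p, hp, hdp⟩ := key k a ha
      refine ⟨p, hp, lt_of_le_of_lt hdp ?_⟩
      have : ρ ^ k * M ≤ ρ ^ k * (M + 1) := by nlinarith [pow_pos hρ0 k]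
      have h2 : ρ ^ k * (M + 1) < ε := by
        rw [lt_div_iff₀ (by positivity : (0:ℝ) < M + 1)] at hk
        exact hk
      linarith
    rwa [closure_closure] at this
  -- fWord facts
  have hWcons : ∀ (j : Fin m) (w : List (Fin m)) x,
      fWord f (j :: w) x = f j (fWord f w x) := fun j w x => rfl
  have hWU : ∀ (w : List (Fin m)) x, x ∈ U → fWord f w x ∈ U := by
    intro w
    induction w with
    | nil => intro x hx; exact hx
    | cons j w ih =>
      intro x hx
      rw [hWcons]
      exact hUsub j ⟨fWord f w x, ih x hx, rfl⟩
  have hWC : ∀ (w : List (Fin m)) x, x ∈ closure U → fWord f w x ∈ closure U := by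
    intro w
    induction w with
    | nil => intro x hx; exact hx
    | cons j w ih =>
      intro x hx
      rw [hWcons]
      exact hclos j ⟨fWord f w x, ih x hx, rfl⟩
  -- boundaryUnion is disjoint from U
  have hBU : boundaryUnion f A ∩ U = ∅ := by
    rw [eq_empty_iff_forall_notMem]
    rintro x ⟨⟨v, w, hvne, hlen, hhead, hxA, hxpre⟩, hxU⟩
    obtain ⟨a, v', rfl⟩ := List.exists_cons_of_ne_nil hvne
    obtain ⟨b, w', rfl⟩ := List.exists_cons_of_ne_nil (by
      intro h; rw [h] at hlen; simp at hlen : (w : List (Fin m)) ≠ [])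
    have hab : a ≠ b := by
      intro h; apply hhead; simp [h]
    -- the point fWord f (b :: w') x lies in f b '' U
    have hp1 : fWord f (b :: w') x ∈ f b '' U := by
      rw [hWcons]
      exact ⟨fWord f w' x, hWU w' x hxU, rfl⟩
    -- and also in closure (f a '' U)
    have hp2 : fWord f (b :: w') x ∈ closure (f a '' U) := by
      obtain ⟨y, hyA, hy⟩ := hxpre
      have : fWord f (a :: v') y = f a (fWord f v' y) := rfl
      rw [← hy, this]
      have hyC : fWord f v' y ∈ closure U := hWC v' y (hAclos hyA)
      exact image_closure_subset_closure_image (hcont a) ⟨fWord f v' y, hyC, rfl⟩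
    -- contradiction with openness and disjointness
    have hsub : f a '' U ⊆ (f b '' U)ᶜ :=
      fun z hz hzb => (hUdisj a b hab).le_bot ⟨hz, hzb⟩
    have hcsub : closure (f a '' U) ⊆ (f b '' U)ᶜ :=
      closure_minimal hsub (hopen b U hUo).isClosed_compl
    exact hcsub hp2 hp1
  -- conclude via closure
  rw [dynBoundary, eq_empty_iff_forall_notMem]
  rintro x ⟨hxB, hxU⟩
  have h := hUo.inter_closure (t := boundaryUnion f A) ⟨hxU, hxB⟩
  rw [show U ∩ boundaryUnion f A = ∅ from by rw [inter_comm]; exact hBU,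
    closure_empty] at h
  exact h
end
end

section
/- Assume F satisfies the open set condition. Then for every point x in the dynamical interior I(A) there is a word w with x ∈ A_w and A_w ⊆ I(A); consequently I(A) is a countable union of pieces. -/
open Set

noncomputable section

/-- Under the OSC, every point of the dynamical interior `I(A) = A \\ B(A)` lies in a
piece `A_w` contained in `I(A)`; consequently `I(A)` is the (countable) union of the
pieces it contains. -/
theorem dynInterior_union_of_pieces
    {d m : ℕ} (hm : 2 ≤ m) (f : Fin m → Pt d → Pt d) (r : Fin m → ℝ)
    (hr0 : ∀ j, 0 < r j) (hr1 : ∀ j, r j < 1)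
    (hf : ∀ j x y, dist (f j x) (f j y) = r j * dist x y)
    (A : Set (Pt d)) (hAne : A.Nonempty) (hAc : IsCompact A)
    (hA : A = ⋃ j, f j '' A)
    (hOSC : ∃ U : Set (Pt d), U.Nonempty ∧ IsOpen U ∧ (∀ j, f j '' U ⊆ U) ∧
      ∀ i j, i ≠ j → Disjoint (f i '' U) (f j '' U)) :
    (∀ x ∈ A \ dynBoundary f A, ∃ w : List (Fin m), w ≠ [] ∧
        x ∈ fWord f w '' A ∧ fWord f w '' A ⊆ A \ dynBoundary f A) ∧
    A \ dynBoundary f A =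
      ⋃ w ∈ {w : List (Fin m) | w ≠ [] ∧ fWord f w '' A ⊆ A \ dynBoundary f A},
        fWord f w '' A := by
  classical
  haveI : Nonempty (Fin m) := ⟨⟨0, by omega⟩⟩
  set ρ := Finset.univ.sup' Finset.univ_nonempty r with hρdef
  have hρ1 : ρ < 1 := by
    rw [hρdef, Finset.sup'_lt_iff]
    intro j _; exact hr1 j
  have hρle : ∀ j, r j ≤ ρ := fun j => Finset.le_sup' r (Finset.mem_univ j)
  have hρ0 : 0 ≤ ρ := le_trans (hr0 ⟨0, by omega⟩).le (hρle _)
  have fWord_cons : ∀ (j : Fin m) (w : List (Fin m)) (x : Pt d),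
      fWord f (j :: w) x = f j (fWord f w x) := fun _ _ _ => rfl
  have hsubA : ∀ w : List (Fin m), fWord f w '' A ⊆ A := by
    intro w
    induction w with
    | nil => simp [fWord]
    | cons j w ih =>
      intro y hy
      obtain ⟨a, ha, hay⟩ := hy
      rw [fWord_cons] at hay
      have : y ∈ f j '' A := ⟨fWord f w a, ih ⟨a, ha, rfl⟩, hay⟩
      rw [hA]
      exact mem_iUnion.2 ⟨j, this⟩
  have hword : ∀ k : ℕ, ∀ x ∈ A, ∃ w : List (Fin m), w.length = k ∧ x ∈ fWord f w '' A := by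
    intro k
    induction k with
    | zero => intro x hx; exact ⟨[], rfl, ⟨x, hx, rfl⟩⟩
    | succ k ih =>
      intro x hx
      have hx' : x ∈ ⋃ j, f j '' A := by rw [← hA]; exact hx
      obtain ⟨j, y, hy, hxy⟩ := by simpa using hx'
      obtain ⟨w, hwl, z, hz, hzw⟩ := ih y hy
      refine ⟨j :: w, by simp [hwl], ⟨z, hz, ?_⟩⟩
      rw [fWord_cons, hzw]; exact hxy
  have hdist : ∀ w : List (Fin m), ∀ x y : Pt d,
      dist (fWord f w x) (fWord f w y) ≤ ρ ^ w.length * dist x y := by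
    intro w
    induction w with
    | nil => intro x y; simp [fWord]
    | cons j w ih =>
      intro x y
      calc dist (fWord f (j :: w) x) (fWord f (j :: w) y)
          = r j * dist (fWord f w x) (fWord f w y) := by
            rw [fWord_cons, fWord_cons]; exact hf j _ _
        _ ≤ ρ * (ρ ^ w.length * dist x y) :=
            mul_le_mul (hρle j) (ih x y) dist_nonneg hρ0
        _ = ρ ^ (j :: w).length * dist x y := by
            rw [List.length_cons, pow_succ]; ring
  have main : ∀ x ∈ A \ dynBoundary f A, ∃ w : List (Fin m), w ≠ [] ∧
      x ∈ fWord f w '' A ∧ fWord f w '' A ⊆ A \ dynBoundary f A := by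
    intro x hx
    obtain ⟨hxA, hxB⟩ := hx
    have hopen : IsOpen (dynBoundary f A)ᶜ := isClosed_closure.isOpen_compl
    obtain ⟨ε, hε, hball⟩ := Metric.isOpen_iff.1 hopen x hxB
    set D := Metric.diam A with hDdef
    have hD0 : 0 ≤ D := Metric.diam_nonneg
    obtain ⟨n, hn⟩ := exists_pow_lt_of_lt_one
      (show 0 < ε / (D + 1) from div_pos hε (by linarith)) hρ1
    have h4 : ρ ^ n * (D + 1) < ε := (lt_div_iff₀ (by linarith : (0:ℝ) < D + 1)).1 hn
    obtain ⟨w, hwl, hxw⟩ := hword (n + 1) x hxA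
    have hwne : w ≠ [] := by intro h; simp [h] at hwl
    refine ⟨w, hwne, hxw, ?_⟩
    intro y hy
    refine ⟨hsubA w hy, hball ?_⟩
    rw [Metric.mem_ball]
    obtain ⟨a, ha, hay⟩ := hy
    obtain ⟨b, hb, hbx⟩ := hxw
    have h1 : dist y x ≤ ρ ^ (n + 1) * dist a b := by
      rw [← hay, ← hbx]
      have := hdist w a b
      rwa [hwl] at this
    have h2 : dist a b ≤ D := Metric.dist_le_diam_of_mem hAc.isBounded ha hb
    have h3 : ρ ^ (n + 1) ≤ ρ ^ n := pow_le_pow_of_le_one hρ0 hρ1.le (Nat.le_succ n)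
    calc dist y x ≤ ρ ^ (n + 1) * dist a b := h1
      _ ≤ ρ ^ n * (D + 1) :=
          mul_le_mul h3 (h2.trans (by linarith)) dist_nonneg (pow_nonneg hρ0 n)
      _ < ε := h4
  refine ⟨main, Subset.antisymm ?_ ?_⟩
  · intro x hx
    obtain ⟨w, hw, hxw, hsub⟩ := main x hx
    exact mem_biUnion (show w ∈ _ from ⟨hw, hsub⟩) hxw
  · intro x hx
    simp only [mem_iUnion, mem_setOf_eq] at hx
    obtain ⟨w, ⟨hw, hsub⟩, hxw⟩ := hx
    exact hsub hxw
end
end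

section
/- Let U be a nonempty open set such that the images f_1(U),…,f_m(U) are pairwise disjoint subsets of U. Then every boundary set of A is disjoint from U: for all words v, w ∈ {1,…,m}^k of equal length k ≥ 1 with v_1 ≠ w_1 one has (A ∩ f_w^{-1}(f_v(A))) ∩ U = ∅. -/
open Set

noncomputable section

lemma fWord_cons {d m : ℕ} (f : Fin m → Pt d → Pt d) (j : Fin m) (w : List (Fin m)) :
    fWord f (j :: w) = f j ∘ fWord f w := rfl

/-- A similitude with positive ratio is continuous. -/
lemma sim_continuous {d : ℕ} {f : Pt d → Pt d} {c : ℝ} (hc : 0 < c)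
    (hf : ∀ x y, dist (f x) (f y) = c * dist x y) : Continuous f := by
  apply (LipschitzWith.of_dist_le_mul (K := c.toNNReal) ?_).continuous
  intro x y
  rw [hf, Real.coe_toNNReal _ hc.le]

/-- A similitude with positive ratio on Euclidean space is an open map. -/
lemma sim_isOpenMap {d : ℕ} {f : Pt d → Pt d} {c : ℝ} (hc : 0 < c)
    (hf : ∀ x y, dist (f x) (f y) = c * dist x y) : IsOpenMap f := by
  set g : Pt d → Pt d := fun x => c⁻¹ • f x with hg
  have hgi : Isometry g := by
    apply Isometry.of_dist_eq
    intro x y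
    rw [hg]
    simp only
    rw [dist_smul₀, hf, norm_inv, Real.norm_eq_abs, abs_of_pos hc]
    field_simp
  let G := hgi.affineIsometryOfStrictConvexSpace
  have hlin : Function.Injective G.toAffineMap.linear := G.linearIsometry.injective
  have hsurj : Function.Surjective g := by
    rw [show g = ⇑G.toAffineMap from rfl] at *
    exact G.toAffineMap.linear_surjective_iff.mp
      (LinearMap.injective_iff_surjective.mp hlin)
  have hgo : IsOpenMap g := by
    let e : Pt d ≃ᵢ Pt d := ⟨Equiv.ofBijective g ⟨hgi.injective, hsurj⟩, hgi⟩
    exact e.toHomeomorph.isOpenMap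
  have hfg : f = (c • ·) ∘ g := by
    funext x
    simp [hg, smul_smul, mul_inv_cancel₀ hc.ne']
  rw [hfg]
  exact (Homeomorph.smulOfNeZero c hc.ne').isOpenMap.comp hgo

/-- Word maps are continuous. -/
lemma fWord_continuous {d m : ℕ} {f : Fin m → Pt d → Pt d}
    (hcont : ∀ j, Continuous (f j)) (w : List (Fin m)) : Continuous (fWord f w) := by
  induction w with
  | nil => exact continuous_id
  | cons k t ih => exact (hcont k).comp ih

/-- Word maps preserve a forward-invariant set. -/
lemma fWord_mapsTo {d m : ℕ} {f : Fin m → Pt d → Pt d} {U : Set (Pt d)}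
    (hUsub : ∀ j, f j '' U ⊆ U) (w : List (Fin m)) : MapsTo (fWord f w) U U := by
  induction w with
  | nil => exact fun x hx => hx
  | cons j t ih =>
      intro x hx
      exact hUsub j ⟨fWord f t x, ih hx, rfl⟩

/-- Word maps scale distances by the product of the ratios. -/
lemma fWord_dist {d m : ℕ} {f : Fin m → Pt d → Pt d} {r : Fin m → ℝ}
    (hf : ∀ j x y, dist (f j x) (f j y) = r j * dist x y)
    (w : List (Fin m)) (x y : Pt d) :
    dist (fWord f w x) (fWord f w y) = (w.map r).prod * dist x y := by
  induction w with
  | nil => simp [fWord]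
  | cons j t ih =>
      rw [fWord_cons, Function.comp_apply, Function.comp_apply, hf, ih,
        List.map_cons, List.prod_cons, mul_assoc]

/-- The attractor lies in the closure of the forward-invariant open set. -/
lemma attractor_subset_closure {d m : ℕ} (hm : 2 ≤ m) {f : Fin m → Pt d → Pt d}
    {r : Fin m → ℝ} (hr0 : ∀ j, 0 < r j) (hr1 : ∀ j, r j < 1)
    (hf : ∀ j x y, dist (f j x) (f j y) = r j * dist x y)
    {A : Set (Pt d)} (hAc : IsCompact A) (hA : A = ⋃ j, f j '' A)
    {U : Set (Pt d)} (hUne : U.Nonempty) (hUsub : ∀ j, f j '' U ⊆ U) :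
    A ⊆ closure U := by
  obtain ⟨u, hu⟩ := hUne
  obtain ⟨M, hM⟩ := hAc.isBounded.subset_closedBall u
  -- the uniform contraction ratio
  have hFin : Nonempty (Fin m) := ⟨⟨0, by omega⟩⟩
  set c : ℝ := Finset.univ.sup' (Finset.univ_nonempty) r with hcdef
  have hrc : ∀ j, r j ≤ c := fun j => Finset.le_sup' r (Finset.mem_univ j)
  have hc0 : 0 ≤ c := le_trans (hr0 (Classical.arbitrary _)).le (hrc _)
  have hc1 : c < 1 := by
    rw [hcdef]
    exact (Finset.sup'_lt_iff Finset.univ_nonempty).mpr (fun j _ => hr1 j)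
  -- products over words are at most c ^ length
  have hprod : ∀ w : List (Fin m), (w.map r).prod ≤ c ^ w.length ∧ 0 ≤ (w.map r).prod := by
    intro w
    induction w with
    | nil => simp
    | cons j t ih =>
        simp only [List.map_cons, List.prod_cons, List.length_cons, pow_succ]
        constructor
        · rw [mul_comm (c ^ t.length) c]
          exact mul_le_mul (hrc j) ih.1 ih.2 hc0
        · exact mul_nonneg (hr0 j).le ih.2
  -- every point of A is in a level-n piece
  have hcover : ∀ n : ℕ, ∀ a ∈ A, ∃ w : List (Fin m),
      w.length = n ∧ a ∈ fWord f w '' A := by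
    intro n
    induction n with
    | zero => exact fun a ha => ⟨[], rfl, ⟨a, ha, rfl⟩⟩
    | succ n ih =>
        intro a ha
        rw [hA] at ha
        obtain ⟨j, b, hb, hba⟩ := mem_iUnion.mp ha
        obtain ⟨w, hwl, cc, hcA, hcb⟩ := ih b hb
        exact ⟨j :: w, by simp [hwl], ⟨cc, hcA, by
          rw [fWord_cons, Function.comp_apply, hcb, hba]⟩⟩
  intro a ha
  rw [Metric.mem_closure_iff]
  intro ε hε
  -- choose n with c ^ n * (M' + 1) < ε, where M' bounds dist · u on A
  have hM0 : 0 ≤ max M 0 := le_max_right _ _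
  have htend : Filter.Tendsto (fun n : ℕ => c ^ n * (max M 0 + 1)) Filter.atTop (nhds 0) := by
    have := (tendsto_pow_atTop_nhds_zero_of_lt_one hc0 hc1).mul_const (max M 0 + 1)
    simpa using this
  obtain ⟨n, hn⟩ := (htend.eventually (gt_mem_nhds hε)).exists
  obtain ⟨w, hwl, b, hbA, hba⟩ := hcover n a ha
  refine ⟨fWord f w u, fWord_mapsTo hUsub w hu, ?_⟩
  have hdb : dist b u ≤ max M 0 :=
    le_trans (Metric.mem_closedBall.mp (hM hbA)) (le_max_left _ _)
  calc dist a (fWord f w u) = (w.map r).prod * dist b u := by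
        rw [← hba, fWord_dist hf]
    _ ≤ c ^ n * (max M 0 + 1) := by
        have h1 := (hprod w).1
        have h2 := (hprod w).2
        rw [hwl] at h1
        have hcn : (0:ℝ) ≤ c ^ n := pow_nonneg hc0 n
        exact mul_le_mul (le_trans h1 (le_refl _))
          (le_trans hdb (by linarith)) dist_nonneg hcn
    _ < ε := hn

/-- If the images `f_j(U)` of a nonempty open set `U` are pairwise disjoint subsets
of `U`, then every boundary set `A ∩ f_w⁻¹(f_v(A))` (for words `v, w` of equal
length `k ≥ 1` with different first letters) is disjoint from `U`. -/
theorem boundarySet_inter_osc_set_eq_empty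
    {d m : ℕ} (hm : 2 ≤ m) (f : Fin m → Pt d → Pt d) (r : Fin m → ℝ)
    (hr0 : ∀ j, 0 < r j) (hr1 : ∀ j, r j < 1)
    (hf : ∀ j x y, dist (f j x) (f j y) = r j * dist x y)
    (A : Set (Pt d)) (hAne : A.Nonempty) (hAc : IsCompact A)
    (hA : A = ⋃ j, f j '' A)
    (U : Set (Pt d)) (hUne : U.Nonempty) (hUo : IsOpen U)
    (hUsub : ∀ j, f j '' U ⊆ U)
    (hUdisj : ∀ i j, i ≠ j → Disjoint (f i '' U) (f j '' U))
    (v w : List (Fin m)) (hv : v ≠ []) (hlen : v.length = w.length)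
    (hhead : v.head? ≠ w.head?) :
    (A ∩ fWord f w ⁻¹' (fWord f v '' A)) ∩ U = ∅ := by
  have hcont : ∀ j, Continuous (f j) := fun j => sim_continuous (hr0 j) (hf j)
  have hAU : A ⊆ closure U := attractor_subset_closure hm hr0 hr1 hf hAc hA hUne hUsub
  ext x
  simp only [mem_inter_iff, mem_empty_iff_false, iff_false, not_and]
  rintro ⟨hxA, hxw⟩ hxU
  obtain ⟨i, v', rfl⟩ := List.exists_cons_of_ne_nil hv
  have hw : w ≠ [] := by
    intro h; subst h; simp at hlen
  obtain ⟨j, w', rfl⟩ := List.exists_cons_of_ne_nil hw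
  have hij : i ≠ j := by
    simp only [List.head?_cons, ne_eq, Option.some.injEq] at hhead
    exact hhead
  obtain ⟨a, haA, hav⟩ := hxw
  -- the point y lies in f j '' U ...
  have hyw : fWord f (j :: w') x ∈ f j '' U :=
    ⟨fWord f w' x, fWord_mapsTo hUsub w' hxU, rfl⟩
  -- ... and in the closure of f i '' U
  have hv'cl : fWord f v' a ∈ closure U := by
    exact map_mem_closure (fWord_continuous hcont v') (hAU haA) (fWord_mapsTo hUsub v')
  have hyv : fWord f (j :: w') x ∈ closure (f i '' U) := by
    rw [← hav, fWord_cons, Function.comp_apply]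
    exact map_mem_closure (hcont i) hv'cl (mapsTo_image (f i) U)
  -- contradiction with the OSC disjointness
  have hopen : IsOpen (f j '' U) := sim_isOpenMap (hr0 j) (hf j) U hUo
  have hdisj : Disjoint (f j '' U) (closure (f i '' U)) :=
    (hUdisj j i hij.symm).closure_right hopen
  exact hdisj.ne_of_mem hyw hyv rfl
end
end

section
/- Assume F satisfies the open set condition and A has nonempty topological interior. Then the topological boundary (frontier) of A in ℝ^d is covered by the boundary sets: frontier(A) ⊆ ⋃ { A ∩ f_w^{-1}(f_v(A)) : v, w words of equal length k ≥ 1 with v_1 ≠ w_1 }. -/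
open Set

noncomputable section

/-- Under the OSC, if `A` has nonempty topological interior, then the topological
frontier of `A` is covered by the boundary sets. -/
theorem frontier_subset_boundaryUnion
    {d m : ℕ} (hm : 2 ≤ m) (f : Fin m → Pt d → Pt d) (r : Fin m → ℝ)
    (hr0 : ∀ j, 0 < r j) (hr1 : ∀ j, r j < 1)
    (hf : ∀ j x y, dist (f j x) (f j y) = r j * dist x y)
    (A : Set (Pt d)) (hAne : A.Nonempty) (hAc : IsCompact A)
    (hA : A = ⋃ j, f j '' A)
    (hOSC : ∃ U : Set (Pt d), U.Nonempty ∧ IsOpen U ∧ (∀ j, f j '' U ⊆ U) ∧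
      ∀ i j, i ≠ j → Disjoint (f i '' U) (f j '' U))
    (hint : (interior A).Nonempty) :
    frontier A ⊆ boundaryUnion f A := by
  have hm0 : 0 < m := by omega
  -- basic facts about fWord
  have fWord_cons : ∀ (a : Fin m) (w : List (Fin m)),
      fWord f (a :: w) = f a ∘ fWord f w := fun a w => rfl
  have dist_fWord : ∀ (w : List (Fin m)) (x y : Pt d),
      dist (fWord f w x) (fWord f w y) = (w.map r).prod * dist x y := by
    intro w
    induction w with
    | nil => intro x y; simp [fWord]
    | cons a w ih =>
      intro x y
      rw [fWord_cons]
      simp only [Function.comp_apply, hf a, ih, List.map_cons, List.prod_cons]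
      ring
  have prod_pos : ∀ w : List (Fin m), 0 < (w.map r).prod := by
    intro w
    induction w with
    | nil => simp
    | cons a w ih => simpa using mul_pos (hr0 a) ih
  have fWord_inj : ∀ w : List (Fin m), Function.Injective (fWord f w) := by
    intro w x y hxy
    have h := dist_fWord w x y
    rw [hxy, dist_self] at h
    have : dist x y = 0 := by
      rcases mul_eq_zero.mp h.symm with h1 | h2
      · exact absurd h1 (prod_pos w).ne'
      · exact h2
    exact dist_eq_zero.mp this
  have fWord_cont : ∀ w : List (Fin m), Continuous (fWord f w) := by
    intro w
    have : LipschitzWith ⟨(w.map r).prod, (prod_pos w).le⟩ (fWord f w) :=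
      LipschitzWith.of_dist_le_mul fun x y => (dist_fWord w x y).le
    exact this.continuous
  -- level-k decomposition
  have mem_piece : ∀ (k : ℕ) (y : Pt d), y ∈ A →
      ∃ w : List (Fin m), w.length = k ∧ y ∈ fWord f w '' A := by
    intro k
    induction k with
    | zero => intro y hy; exact ⟨[], rfl, y, hy, rfl⟩
    | succ k ih =>
      intro y hy
      rw [hA] at hy
      obtain ⟨j, z, hz, rfl⟩ := mem_iUnion.mp hy
      obtain ⟨w, hw, z', hz', hz'e⟩ := ih z hz
      exact ⟨j :: w, by simp [hw], z', hz', by rw [fWord_cons]; simp [hz'e]⟩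
  have piece_subset : ∀ w : List (Fin m), fWord f w '' A ⊆ A := by
    intro w
    induction w with
    | nil => simp [fWord]
    | cons a w ih =>
      rw [fWord_cons, Set.image_comp]
      rintro _ ⟨z, hz, rfl⟩
      rw [hA]
      exact mem_iUnion.mpr ⟨a, z, ih hz, rfl⟩
  intro x hx
  by_contra hxB
  have hAclosed : IsClosed A := hAc.isClosed
  have hxA : x ∈ A := by
    have := frontier_subset_closure hx
    rwa [hAclosed.closure_eq] at this
  have hxc : x ∈ closure Aᶜ := by
    rw [frontier_eq_closure_inter_closure] at hx
    exact hx.2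
  -- key consequence of ¬ boundaryUnion
  have key : ∀ v w : List (Fin m), v.length = w.length → v ≠ w →
      fWord f w x ∉ fWord f v '' A := by
    intro v
    induction v with
    | nil =>
      intro w hlen hne
      cases w with
      | nil => exact absurd rfl hne
      | cons b w' => simp at hlen
    | cons a v' ih =>
      intro w hlen hne
      cases w with
      | nil => simp at hlen
      | cons b w' =>
        by_cases hab : a = b
        · subst hab
          intro hmem
          rw [fWord_cons a w', fWord_cons a v', Set.image_comp] at hmem
          obtain ⟨z, hz, hze⟩ := hmem
          have hz' : fWord f w' x ∈ fWord f v' '' A := by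
            have hzz : z = fWord f w' x :=
              fWord_inj [a] (show fWord f [a] z = fWord f [a] (fWord f w' x) by
                simpa [fWord] using hze)
            rwa [← hzz]
          exact ih w' (by simp only [List.length_cons] at hlen; omega) (fun h => hne (by rw [h])) hz'
        · intro hmem
          exact hxB ⟨a :: v', b :: w', List.cons_ne_nil a v', hlen,
            by simp [hab], hxA, hmem⟩
  -- contraction ratio bound
  have hFn : (Finset.univ : Finset (Fin m)).Nonempty := ⟨⟨0, hm0⟩, Finset.mem_univ _⟩
  set c := Finset.univ.sup' hFn r with hc
  have hc1 : c < 1 := (Finset.sup'_lt_iff hFn).mpr fun j _ => hr1 j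
  have hcr : ∀ j, r j ≤ c := fun j => Finset.le_sup' r (Finset.mem_univ j)
  have hc0 : 0 ≤ c := le_trans (hr0 ⟨0, hm0⟩).le (hcr _)
  have prod_le : ∀ w : List (Fin m), (w.map r).prod ≤ c ^ w.length := by
    intro w
    induction w with
    | nil => simp
    | cons a w ih =>
      simp only [List.map_cons, List.prod_cons, List.length_cons, pow_succ]
      rw [mul_comm (c ^ w.length) c]
      exact mul_le_mul (hcr a) ih (prod_pos w).le hc0
  -- ball inside the interior
  obtain ⟨a, ha⟩ := hint
  obtain ⟨ρ, hρ0, hball⟩ : ∃ ρ > 0, Metric.ball a ρ ⊆ A := by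
    rcases Metric.isOpen_iff.mp isOpen_interior a ha with ⟨ρ, hρ0, h⟩
    exact ⟨ρ, hρ0, h.trans interior_subset⟩
  -- choose k with small pieces
  obtain ⟨k, hk⟩ : ∃ k, c ^ k * (Metric.diam A + 1) < ρ := by
    have htend : Filter.Tendsto (fun k : ℕ => c ^ k * (Metric.diam A + 1))
        Filter.atTop (nhds 0) := by
      have := (tendsto_pow_atTop_nhds_zero_of_lt_one hc0 hc1).mul_const
        (Metric.diam A + 1)
      simpa using this
    exact (htend.eventually (gt_mem_nhds hρ0)).exists
  have haA : a ∈ A := interior_subset ha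
  obtain ⟨u, hulen, hau⟩ := mem_piece k a haA
  have hAu : fWord f u '' A ⊆ Metric.ball a ρ := by
    rintro _ ⟨z, hz, rfl⟩
    obtain ⟨z0, hz0, hz0e⟩ := hau
    rw [Metric.mem_ball]
    calc dist (fWord f u z) a = (u.map r).prod * dist z z0 := by
          rw [← hz0e, dist_fWord]
      _ ≤ c ^ k * (Metric.diam A + 1) := by
          rw [← hulen]
          refine mul_le_mul (prod_le u) ?_ dist_nonneg (pow_nonneg hc0 _)
          exact le_trans (Metric.dist_le_diam_of_mem hAc.isBounded hz hz0)
            (by linarith)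
      _ < ρ := hk
  have hAuint : fWord f u '' A ⊆ interior A :=
    hAu.trans (interior_maximal hball Metric.isOpen_ball)
  -- the union of the other pieces of level k
  set T : Set (List (Fin m)) := {v | v.length = k ∧ v ≠ u} with hT
  have hTfin : T.Finite :=
    (List.finite_length_eq (Fin m) k).subset fun v hv => hv.1
  set C : Set (Pt d) := ⋃ v ∈ T, fWord f v '' A with hCdef
  have hCclosed : IsClosed C :=
    hTfin.isClosed_biUnion fun v _ => (hAc.image (fWord_cont v)).isClosed
  have hzC : fWord f u x ∉ C := by
    intro hmem
    simp only [hCdef, mem_iUnion] at hmem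
    obtain ⟨v, ⟨hv1, hv2⟩, hmem⟩ := hmem
    exact key v u (hv1.trans hulen.symm) hv2 hmem
  -- the point f_u x lies in interior A ∩ Cᶜ, an open set, and in closure (f_u '' Aᶜ)
  have hzcl : fWord f u x ∈ closure (fWord f u '' Aᶜ) :=
    image_closure_subset_closure_image (fWord_cont u) ⟨x, hxc, rfl⟩
  have hzW : fWord f u x ∈ interior A ∩ Cᶜ :=
    ⟨hAuint ⟨x, hxA, rfl⟩, hzC⟩
  obtain ⟨y, hyW, hyim⟩ := _root_.mem_closure_iff.mp hzcl (interior A ∩ Cᶜ)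
    (isOpen_interior.inter hCclosed.isOpen_compl) hzW
  obtain ⟨y0, hy0, rfl⟩ := hyim
  obtain ⟨v, hvlen, hyv⟩ := mem_piece k (fWord f u y0) (interior_subset hyW.1)
  by_cases hvu : v = u
  · subst hvu
    obtain ⟨z, hz, hze⟩ := hyv
    exact hy0 (fWord_inj v hze ▸ hz)
  · exact hyW.2 (by
      simp only [hCdef, mem_iUnion]
      exact ⟨v, ⟨hvlen, hvu⟩, hyv⟩)
end
end

section
/- Assume F satisfies the open set condition and A has nonempty topological interior. Then the topological interior int(A) itself witnesses the open set condition: the images f_1(int A),…,f_m(int A) are pairwise disjoint subsets of int A. -/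
open Set

noncomputable section

open MeasureTheory Metric Module
open scoped ENNReal

/-- A similitude of `ℝ^d` decomposes as `x ↦ ρ • L x + c` with `L` a linear isometry
equivalence. -/
lemma sim_decomp {d : ℕ} (g : Pt d → Pt d) (ρ : ℝ) (hρ : 0 < ρ)
    (hg : ∀ x y, dist (g x) (g y) = ρ * dist x y) :
    ∃ L : Pt d ≃ₗᵢ[ℝ] Pt d, ∀ x, g x = ρ • L x + g 0 := by
  have hiso : Isometry (fun x : Pt d => ρ⁻¹ • (g x - g 0)) := by
    refine Isometry.of_dist_eq fun x y => ?_
    rw [dist_smul₀, dist_sub_right, hg, Real.norm_eq_abs, abs_of_pos (inv_pos.2 hρ)]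
    field_simp
  set G := hiso.affineIsometryOfStrictConvexSpace with hGdef
  have hGco : ∀ x, G x = ρ⁻¹ • (g x - g 0) := fun x => by
    rw [hGdef, hiso.coe_affineIsometryOfStrictConvexSpace]
  have h0 : G 0 = 0 := by rw [hGco]; simp
  have hlin : ∀ x, G.linearIsometry x = ρ⁻¹ • (g x - g 0) := by
    intro x
    have h := G.map_vadd (0 : Pt d) x
    rw [vadd_eq_add, add_zero] at h
    rw [h0, vadd_eq_add, add_zero] at h
    rw [← h, hGco]
  refine ⟨G.linearIsometry.toLinearIsometryEquiv rfl, fun x => ?_⟩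
  have : (G.linearIsometry.toLinearIsometryEquiv rfl : Pt d → Pt d) x
      = ρ⁻¹ • (g x - g 0) := by
    rw [LinearIsometry.coe_toLinearIsometryEquiv]; exact hlin x
  rw [this, smul_smul, mul_inv_cancel₀ hρ.ne', one_smul]
  abel

lemma sim_continuous_s10 {d : ℕ} (g : Pt d → Pt d) (ρ : ℝ) (hρ : 0 < ρ)
    (hg : ∀ x y, dist (g x) (g y) = ρ * dist x y) : Continuous g := by
  obtain ⟨L, hL⟩ := sim_decomp g ρ hρ hg
  have : g = fun x => ρ • L x + g 0 := funext hL
  rw [this]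
  exact (L.continuous.const_smul ρ).add continuous_const

lemma sim_isOpenMap_s10 {d : ℕ} (g : Pt d → Pt d) (ρ : ℝ) (hρ : 0 < ρ)
    (hg : ∀ x y, dist (g x) (g y) = ρ * dist x y) : IsOpenMap g := by
  obtain ⟨L, hL⟩ := sim_decomp g ρ hρ hg
  have hgeq : g = (fun y => y + g 0) ∘ (fun y : Pt d => ρ • y) ∘ ⇑L := funext fun x => hL x
  rw [hgeq]
  exact (Homeomorph.addRight (g 0)).isOpenMap.comp
    ((isOpenMap_smul₀ hρ.ne').comp L.toHomeomorph.isOpenMap)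

lemma sim_volume {d : ℕ} (g : Pt d → Pt d) (ρ : ℝ) (hρ : 0 < ρ)
    (hg : ∀ x y, dist (g x) (g y) = ρ * dist x y) {S : Set (Pt d)} (hS : MeasurableSet S) :
    volume (g '' S) = ENNReal.ofReal (ρ ^ d) * volume S := by
  obtain ⟨L, hL⟩ := sim_decomp g ρ hρ hg
  have hgeq : g = (fun y => y + g 0) ∘ (fun y : Pt d => ρ • y) ∘ ⇑L := funext fun x => hL x
  have himg : g '' S = (fun y => y + g 0) '' ((fun y : Pt d => ρ • y) '' (⇑L '' S)) := by
    conv_lhs => rw [hgeq]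
    rw [Set.image_comp, Set.image_comp]
  have hL' : volume (L '' S) = volume S := by
    rw [L.image_eq_preimage_symm]
    exact L.symm.measurePreserving.measure_preimage hS.nullMeasurableSet
  have htrans : ∀ T : Set (Pt d), volume ((fun y => y + g 0) '' T) = volume T := by
    intro T
    have : (fun y => y + g 0) '' T = (fun y => y + (-g 0)) ⁻¹' T := by
      ext y
      constructor
      · rintro ⟨x, hx, rfl⟩
        show x + g 0 + -g 0 ∈ T
        rwa [add_neg_cancel_right]
      · intro hy
        exact ⟨y + -g 0, hy, neg_add_cancel_right y (g 0)⟩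
    rw [this, measure_preimage_add_right]
  rw [himg, htrans, Set.image_smul, Measure.addHaar_smul, hL', finrank_euclideanSpace_fin,
    abs_of_pos (pow_pos hρ d)]

/-- Under the OSC, if `A` has nonempty topological interior, then `int A` itself
witnesses the open set condition: the sets `f_j(int A)` are pairwise disjoint
subsets of `int A`. -/
theorem interior_witnesses_osc
    {d m : ℕ} (hm : 2 ≤ m) (f : Fin m → Pt d → Pt d) (r : Fin m → ℝ)
    (hr0 : ∀ j, 0 < r j) (hr1 : ∀ j, r j < 1)
    (hf : ∀ j x y, dist (f j x) (f j y) = r j * dist x y)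
    (A : Set (Pt d)) (hAne : A.Nonempty) (hAc : IsCompact A)
    (hA : A = ⋃ j, f j '' A)
    (hOSC : ∃ U : Set (Pt d), U.Nonempty ∧ IsOpen U ∧ (∀ j, f j '' U ⊆ U) ∧
      ∀ i j, i ≠ j → Disjoint (f i '' U) (f j '' U))
    (hint : (interior A).Nonempty) :
    (∀ j, f j '' interior A ⊆ interior A) ∧
    ∀ i j, i ≠ j → Disjoint (f i '' interior A) (f j '' interior A) := by
  classical
  have hopen : ∀ j, IsOpenMap (f j) := fun j => sim_isOpenMap_s10 _ _ (hr0 j) (hf j)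
  have hcont : ∀ j, Continuous (f j) := fun j => sim_continuous_s10 _ _ (hr0 j) (hf j)
  have hvol : ∀ j, ∀ {S : Set (Pt d)}, MeasurableSet S →
      volume (f j '' S) = ENNReal.ofReal (r j ^ d) * volume S :=
    fun j _ hS => sim_volume _ _ (hr0 j) (hf j) hS
  have hsub : ∀ j, f j '' A ⊆ A := by
    intro j x hx
    rw [hA]
    exact mem_iUnion.2 ⟨j, hx⟩
  have h1 : ∀ j, f j '' interior A ⊆ interior A := fun j =>
    interior_maximal ((image_mono  interior_subset).trans (hsub j))
      ((hopen j) _ isOpen_interior)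
  set μ := (volume : Measure (Pt d)) with hμdef
  set t : ℝ≥0∞ := ∑ j, ENNReal.ofReal (r j ^ d) with ht
  have hAmeas : MeasurableSet A := hAc.measurableSet
  have hμA_pos : 0 < μ A :=
    lt_of_lt_of_le (isOpen_interior.measure_pos μ hint) (measure_mono interior_subset)
  have hμA_fin : μ A < ⊤ := hAc.measure_lt_top
  have ht_fin : t ≠ ⊤ := by
    rw [ht]
    exact (ENNReal.sum_lt_top.2 fun j _ => ENNReal.ofReal_lt_top).ne
  -- `1 ≤ t`
  have ht_ge : 1 ≤ t := by
    have hle : μ A ≤ t * μ A := by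
      conv_lhs => rw [hA]
      refine (measure_iUnion_le _).trans ?_
      rw [tsum_fintype, ht, Finset.sum_mul]
      exact le_of_eq (Finset.sum_congr rfl fun j _ => hvol j hAmeas)
    by_contra h
    push_neg at h
    have : t * μ A < 1 * μ A :=
      ENNReal.mul_lt_mul_left hμA_pos.ne' hμA_fin.ne h
    rw [one_mul] at this
    exact absurd hle (not_le.2 this)
  -- `t ≤ 1`
  obtain ⟨U, hUne, hUopen, hUsub, hUdisj⟩ := hOSC
  obtain ⟨x₀, hx₀⟩ := hUne
  obtain ⟨ε, hε, hball⟩ := Metric.isOpen_iff.1 hUopen x₀ hx₀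
  set B := Metric.ball x₀ ε with hBdef
  obtain ⟨a₀, ha₀⟩ := hAne
  set C : ℝ := dist x₀ a₀ + ε with hCdef
  set R : ℝ := C + Metric.diam A with hRdef
  set D : ℕ → Set (Pt d) := fun k => Nat.rec B (fun _ Dk => ⋃ j, f j '' Dk) k with hD
  have hD0 : D 0 = B := rfl
  have hDsucc : ∀ k, D (k + 1) = ⋃ j, f j '' D k := fun k => rfl
  have hDopen : ∀ k, IsOpen (D k) := by
    intro k; induction k with
    | zero => exact Metric.isOpen_ball
    | succ k ih => rw [hDsucc]; exact isOpen_iUnion fun j => hopen j _ ih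
  have hDU : ∀ k, D k ⊆ U := by
    intro k; induction k with
    | zero => exact hball
    | succ k ih => rw [hDsucc]; exact iUnion_subset fun j => (image_mono  ih).trans (hUsub j)
  have hDnear : ∀ k, ∀ x ∈ D k, ∃ a ∈ A, dist x a ≤ C := by
    intro k; induction k with
    | zero =>
      intro x hx
      refine ⟨a₀, ha₀, (dist_triangle x x₀ a₀).trans ?_⟩
      have hxb : dist x x₀ < ε := Metric.mem_ball.1 hx
      rw [hCdef]; linarith
    | succ k ih =>
      intro x hx
      rw [hDsucc] at hx
      simp only [mem_iUnion, Set.mem_image] at hx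
      obtain ⟨j, y, hy, rfl⟩ := hx
      obtain ⟨a, haA, hya⟩ := ih y hy
      refine ⟨f j a, hsub j ⟨a, haA, rfl⟩, ?_⟩
      rw [hf]
      calc r j * dist y a ≤ 1 * dist y a :=
            mul_le_mul_of_nonneg_right (le_of_lt (hr1 j)) dist_nonneg
        _ = dist y a := one_mul _
        _ ≤ C := hya
  have hDball : ∀ k, D k ⊆ Metric.closedBall a₀ R := by
    intro k x hx
    obtain ⟨a, haA, hxa⟩ := hDnear k x hx
    rw [Metric.mem_closedBall, hRdef]
    calc dist x a₀ ≤ dist x a + dist a a₀ := dist_triangle _ _ _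
      _ ≤ C + Metric.diam A :=
          add_le_add hxa (Metric.dist_le_diam_of_mem hAc.isBounded haA ha₀)
  have hDvol : ∀ k, μ (D k) = t ^ k * μ B := by
    intro k; induction k with
    | zero => rw [hD0, pow_zero, one_mul]
    | succ k ih =>
      have hdisj : Pairwise (Function.onFun Disjoint fun j => f j '' D k) := by
        intro i j hij
        exact (hUdisj i j hij).mono (image_mono  (hDU k)) (image_mono  (hDU k))
      rw [hDsucc, measure_iUnion hdisj fun j => ((hopen j) _ (hDopen k)).measurableSet,
        tsum_fintype]
      calc ∑ j, μ (f j '' D k) = ∑ j, ENNReal.ofReal (r j ^ d) * μ (D k) :=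
            Finset.sum_congr rfl fun j _ => hvol j (hDopen k).measurableSet
        _ = t * μ (D k) := by rw [ht, Finset.sum_mul]
        _ = t * (t ^ k * μ B) := by rw [ih]
        _ = t ^ (k + 1) * μ B := by ring
  have ht_le : t ≤ 1 := by
    by_contra h
    push_neg at h
    have hμB_pos : 0 < μ B := Metric.measure_ball_pos μ x₀ hε
    set K := μ (Metric.closedBall a₀ R) with hK
    have hKfin : K < ⊤ := measure_closedBall_lt_top
    have hbound : ∀ k, t ^ k ≤ K / μ B := by
      intro k
      rw [ENNReal.le_div_iff_mul_le (Or.inl hμB_pos.ne') (Or.inl measure_ball_lt_top.ne)]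
      rw [← hDvol k]
      exact measure_mono (hDball k)
    have htr : 1 < t.toReal := by
      have := (ENNReal.toReal_lt_toReal (by simp) ht_fin).2 h
      simpa using this
    obtain ⟨k, hk⟩ := pow_unbounded_of_one_lt ((K / μ B).toReal) htr
    have h2 : (t ^ k).toReal ≤ (K / μ B).toReal :=
      ENNReal.toReal_mono (ENNReal.div_lt_top hKfin.ne hμB_pos.ne').ne (hbound k)
    rw [ENNReal.toReal_pow] at h2
    linarith
  have ht1 : t = 1 := le_antisymm ht_le ht_ge
  -- pairwise null intersections of the pieces `f k '' A`
  set S : Fin m → Set (Pt d) := fun k => f k '' A with hSdef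
  have hScompact : ∀ k, IsCompact (S k) := fun k => hAc.image (hcont k)
  have hSmeas : ∀ k, MeasurableSet (S k) := fun k => (hScompact k).measurableSet
  have hSfin : ∀ k, μ (S k) < ⊤ := fun k => (hScompact k).measure_lt_top
  have hSvol : ∀ k, μ (S k) = ENNReal.ofReal (r k ^ d) * μ A := fun k => hvol k hAmeas
  have hsum : ∑ k, μ (S k) = μ A := by
    calc ∑ k, μ (S k) = ∑ k, ENNReal.ofReal (r k ^ d) * μ A :=
          Finset.sum_congr rfl fun k _ => hSvol k
      _ = t * μ A := by rw [ht, Finset.sum_mul]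
      _ = μ A := by rw [ht1, one_mul]
  have hnull : ∀ i j, i ≠ j → μ (S i ∩ S j) = 0 := by
    intro i j hij
    set fs : Finset (Fin m) := (Finset.univ.erase i).erase j with hfs
    have hjmem : j ∈ Finset.univ.erase i := Finset.mem_erase.2 ⟨hij.symm, Finset.mem_univ j⟩
    have hsplit : ∑ k, μ (S k) = μ (S i) + (μ (S j) + ∑ k ∈ fs, μ (S k)) := by
      have e1 : ∑ k, μ (S k) = μ (S i) + ∑ k ∈ Finset.univ.erase i, μ (S k) :=
        (Finset.add_sum_erase _ _ (Finset.mem_univ i)).symm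
      have e2 : ∑ k ∈ Finset.univ.erase i, μ (S k) = μ (S j) + ∑ k ∈ fs, μ (S k) := by
        rw [hfs]; exact (Finset.add_sum_erase _ _ hjmem).symm
      rw [e1, e2]
    have hfs_fin : ∑ k ∈ fs, μ (S k) ≠ ⊤ :=
      (ENNReal.sum_lt_top.2 fun k _ => hSfin k).ne
    have hcover : μ A ≤ μ (S i ∪ S j) + ∑ k ∈ fs, μ (S k) := by
      have hsubset : A ⊆ (S i ∪ S j) ∪ ⋃ k ∈ fs, S k := by
        intro x hx
        rw [hA] at hx
        obtain ⟨k, hk⟩ := mem_iUnion.1 hx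
        by_cases hki : k = i
        · exact Or.inl (Or.inl (hki ▸ hk))
        by_cases hkj : k = j
        · exact Or.inl (Or.inr (hkj ▸ hk))
        · refine Or.inr (mem_biUnion ?_ hk)
          rw [hfs]
          exact Finset.mem_erase.2 ⟨hkj, Finset.mem_erase.2 ⟨hki, Finset.mem_univ k⟩⟩
      calc μ A ≤ μ ((S i ∪ S j) ∪ ⋃ k ∈ fs, S k) := measure_mono hsubset
        _ ≤ μ (S i ∪ S j) + μ (⋃ k ∈ fs, S k) := measure_union_le _ _
        _ ≤ μ (S i ∪ S j) + ∑ k ∈ fs, μ (S k) :=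
            add_le_add le_rfl (measure_biUnion_finset_le _ _)
    have hkey : μ (S i) + μ (S j) ≤ μ (S i ∪ S j) := by
      have h3 : μ (S i) + μ (S j) + ∑ k ∈ fs, μ (S k)
          ≤ μ (S i ∪ S j) + ∑ k ∈ fs, μ (S k) := by
        calc μ (S i) + μ (S j) + ∑ k ∈ fs, μ (S k)
            = ∑ k, μ (S k) := by rw [hsplit]; ring
          _ = μ A := hsum
          _ ≤ _ := hcover
      exact (ENNReal.add_le_add_iff_right hfs_fin).1 h3
    have hunion_fin : μ (S i ∪ S j) ≠ ⊤ :=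
      ((measure_union_le _ _).trans_lt (ENNReal.add_lt_top.2 ⟨hSfin i, hSfin j⟩)).ne
    have h4 : μ (S i ∪ S j) + μ (S i ∩ S j) ≤ μ (S i ∪ S j) + 0 := by
      rw [add_zero, measure_union_add_inter _ (hSmeas j)]
      exact hkey
    have := (ENNReal.add_le_add_iff_left hunion_fin).1 h4
    exact le_antisymm this (zero_le)
  refine ⟨h1, fun i j hij => ?_⟩
  rw [Set.disjoint_iff_inter_eq_empty]
  by_contra hne
  have hVopen : IsOpen (f i '' interior A ∩ f j '' interior A) :=
    ((hopen i) _ isOpen_interior).inter ((hopen j) _ isOpen_interior)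
  have hpos := hVopen.measure_pos μ (nonempty_iff_ne_empty.2 hne)
  have hle : μ (f i '' interior A ∩ f j '' interior A) ≤ μ (S i ∩ S j) :=
    measure_mono (inter_subset_inter (image_mono  interior_subset)
      (image_mono  interior_subset))
  rw [hnull i j hij] at hle
  exact absurd (le_antisymm hle (zero_le)) hpos.ne'
end
end

section
/- Let k : ℂ → ℂ be the map k(z) = −z − 1 and set K = A ∩ k(A). Then K satisfies the graph-directed equation K = f_{112}(K) ∪ f_{123}(K) ∪ f_{312}(K) ∪ f_{323}(K), where f_{w_1 w_2 w_3} = f_{w_1} ∘ f_{w_2} ∘ f_{w_3}. -/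
open Set Complex

noncomputable section

/-- The fractal-square IFS maps `f₁(z) = -iz/2 - (1+i)/4`, `f₂(z) = -z/2 + (1-i)/4`,
`f₃(z) = -iz/2 - (1-i)/4`. -/
def fsq₁ : ℂ → ℂ := fun z => -Complex.I * z / 2 - (1 + Complex.I) / 4

def fsq₂ : ℂ → ℂ := fun z => -z / 2 + (1 - Complex.I) / 4

def fsq₃ : ℂ → ℂ := fun z => -Complex.I * z / 2 - (1 - Complex.I) / 4

-- auxiliary lemmas
private lemma f1_re (z : ℂ) : (fsq₁ z).re = z.im/2 - 1/4 := by simp [fsq₁, Complex.div_re]; try ring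
private lemma f1_im (z : ℂ) : (fsq₁ z).im = -z.re/2 - 1/4 := by simp [fsq₁, Complex.div_im]; try ring
private lemma f2_re (z : ℂ) : (fsq₂ z).re = -z.re/2 + 1/4 := by simp [fsq₂, Complex.div_re]; try ring
private lemma f2_im (z : ℂ) : (fsq₂ z).im = -z.im/2 - 1/4 := by simp [fsq₂, Complex.div_im]; try ring
private lemma f3_re (z : ℂ) : (fsq₃ z).re = z.im/2 - 1/4 := by simp [fsq₃, Complex.div_re]; try ring
private lemma f3_im (z : ℂ) : (fsq₃ z).im = -z.re/2 + 1/4 := by simp [fsq₃, Complex.div_im]; try ring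

private lemma sq_bound {A : Set ℂ} (hAne : A.Nonempty) (hAc : IsCompact A)
    (hA : A = fsq₁ '' A ∪ fsq₂ '' A ∪ fsq₃ '' A) :
    ∀ z ∈ A, |z.re| ≤ 1/2 ∧ |z.im| ≤ 1/2 := by
  have hcont : ContinuousOn (fun z : ℂ => max |z.re| |z.im|) A :=
    ((continuous_abs.comp Complex.continuous_re).max
      (continuous_abs.comp Complex.continuous_im)).continuousOn
  obtain ⟨x, hxA, hx⟩ := hAc.exists_isMaxOn hAne hcont
  set M := max |x.re| |x.im| with hM
  have hMle : M ≤ M/2 + 1/4 := by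
    have hxmem := hxA
    rw [hA] at hxmem
    have hstep : ∀ u ∈ A, ∀ w : ℂ, (w = fsq₁ u ∨ w = fsq₂ u ∨ w = fsq₃ u) →
        max |w.re| |w.im| ≤ M/2 + 1/4 := by
      intro u huA w hw
      have h1 : |u.re| ≤ M := le_trans (le_max_left _ _) (hx huA)
      have h2 : |u.im| ≤ M := le_trans (le_max_right _ _) (hx huA)
      have h1' := abs_le.mp h1
      have h2' := abs_le.mp h2
      rcases hw with rfl | rfl | rfl <;>
        simp only [f1_re, f1_im, f2_re, f2_im, f3_re, f3_im] <;>
        rw [max_le_iff, abs_le, abs_le] <;>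
        constructor <;> constructor <;> linarith
    rcases hxmem with (⟨u, hu, hux⟩ | ⟨u, hu, hux⟩) | ⟨u, hu, hux⟩
    · exact hstep u hu x (Or.inl hux.symm)
    · exact hstep u hu x (Or.inr (Or.inl hux.symm))
    · exact hstep u hu x (Or.inr (Or.inr hux.symm))
  have hM12 : M ≤ 1/2 := by linarith
  intro z hz
  have h1 : |z.re| ≤ M := le_trans (le_max_left _ _) (hx hz)
  have h2 : |z.im| ≤ M := le_trans (le_max_right _ _) (hx hz)
  exact ⟨le_trans h1 hM12, le_trans h2 hM12⟩

section edges
variable {A : Set ℂ} (hA : A = fsq₁ '' A ∪ fsq₂ '' A ∪ fsq₃ '' A)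
  (hb : ∀ z ∈ A, |z.re| ≤ 1/2 ∧ |z.im| ≤ 1/2)

include hA hb

private lemma right_edge : ∀ v ∈ A, v.re = 1/2 → v ∈ fsq₂ '' A := by
  intro v hv hre
  rw [hA] at hv
  rcases hv with (⟨u, hu, rfl⟩ | h) | ⟨u, hu, rfl⟩
  · exfalso; rw [f1_re] at hre; have := (hb u hu).2; rw [abs_le] at this; linarith
  · exact h
  · exfalso; rw [f3_re] at hre; have := (hb u hu).2; rw [abs_le] at this; linarith

private lemma top_edge : ∀ v ∈ A, v.im = 1/2 → v ∈ fsq₃ '' A := by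
  intro v hv him
  rw [hA] at hv
  rcases hv with (⟨u, hu, rfl⟩ | ⟨u, hu, rfl⟩) | h
  · exfalso; rw [f1_im] at him; have := (hb u hu).1; rw [abs_le] at this; linarith
  · exfalso; rw [f2_im] at him; have := (hb u hu).2; rw [abs_le] at this; linarith
  · exact h

private lemma bottom_edge : ∀ v ∈ A, v.im = -(1/2) →
    v ∈ (fsq₁ ∘ fsq₂) '' A ∪ (fsq₂ ∘ fsq₃) '' A := by
  intro v hv him
  rw [hA] at hv
  rcases hv with (⟨u, hu, rfl⟩ | ⟨u, hu, rfl⟩) | ⟨u, hu, rfl⟩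
  · left
    rw [f1_im] at him
    have hre : u.re = 1/2 := by linarith
    obtain ⟨w, hw, rfl⟩ := right_edge hA hb u hu hre
    exact ⟨w, hw, rfl⟩
  · right
    rw [f2_im] at him
    have him' : u.im = 1/2 := by linarith
    obtain ⟨w, hw, rfl⟩ := top_edge hA hb u hu him'
    exact ⟨w, hw, rfl⟩
  · exfalso; rw [f3_im] at him; have := (hb u hu).1; rw [abs_le] at this; linarith

private lemma left_edge : ∀ z ∈ A, z.re = -(1/2) →
    z ∈ (fsq₁ ∘ fsq₁ ∘ fsq₂) '' A ∪ (fsq₁ ∘ fsq₂ ∘ fsq₃) '' A ∪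
        (fsq₃ ∘ fsq₁ ∘ fsq₂) '' A ∪ (fsq₃ ∘ fsq₂ ∘ fsq₃) '' A := by
  intro z hz hre
  rw [hA] at hz
  rcases hz with (⟨u, hu, rfl⟩ | ⟨u, hu, rfl⟩) | ⟨u, hu, rfl⟩
  · rw [f1_re] at hre
    have him : u.im = -(1/2) := by linarith
    rcases bottom_edge hA hb u hu him with ⟨w, hw, rfl⟩ | ⟨w, hw, rfl⟩
    · exact Or.inl (Or.inl (Or.inl ⟨w, hw, rfl⟩))
    · exact Or.inl (Or.inl (Or.inr ⟨w, hw, rfl⟩))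
  · exfalso; rw [f2_re] at hre; have := (hb u hu).1; rw [abs_le] at this; linarith
  · rw [f3_re] at hre
    have him : u.im = -(1/2) := by linarith
    rcases bottom_edge hA hb u hu him with ⟨w, hw, rfl⟩ | ⟨w, hw, rfl⟩
    · exact Or.inl (Or.inr ⟨w, hw, rfl⟩)
    · exact Or.inr ⟨w, hw, rfl⟩

end edges
-- closed forms for the four triple compositions
private lemma g1_eq (z : ℂ) : fsq₁ (fsq₁ (fsq₂ z)) = z/8 + (-7 - Complex.I)/16 := by
  apply Complex.ext <;> simp [fsq₁, fsq₂, Complex.div_re, Complex.div_im] <;> ring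
private lemma g2_eq (z : ℂ) : fsq₁ (fsq₂ (fsq₃ z)) = z/8 + (-7 - 7*Complex.I)/16 := by
  apply Complex.ext <;> simp [fsq₁, fsq₂, fsq₃, Complex.div_re, Complex.div_im] <;> ring
private lemma g3_eq (z : ℂ) : fsq₃ (fsq₁ (fsq₂ z)) = z/8 + (-7 + 7*Complex.I)/16 := by
  apply Complex.ext <;> simp [fsq₁, fsq₂, fsq₃, Complex.div_re, Complex.div_im] <;> ring
private lemma g4_eq (z : ℂ) : fsq₃ (fsq₂ (fsq₃ z)) = z/8 + (-7 + Complex.I)/16 := by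
  apply Complex.ext <;> simp [fsq₂, fsq₃, Complex.div_re, Complex.div_im] <;> ring

private lemma gg_im (z : ℂ) (c : ℂ) : (z/8 + c).im = z.im/8 + c.im := by
  simp [Complex.div_im]; try ring

-- the bottom-left corner lies in A
private lemma corner_mem {A : Set ℂ} (hAne : A.Nonempty) (hAc : IsCompact A)
    (hA : A = fsq₁ '' A ∪ fsq₂ '' A ∪ fsq₃ '' A) :
    -(1 + Complex.I)/2 ∈ A := by
  obtain ⟨a, ha⟩ := hAne
  set p : ℂ := -(1 + Complex.I)/2 with hp
  set g : ℂ → ℂ := fun z => fsq₁ (fsq₂ (fsq₃ z)) with hg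
  have hgA : ∀ u ∈ A, g u ∈ A := by
    intro u hu
    have h3 : fsq₃ u ∈ A := by rw [hA]; exact Or.inr ⟨u, hu, rfl⟩
    have h2 : fsq₂ (fsq₃ u) ∈ A := by rw [hA]; exact Or.inl (Or.inr ⟨_, h3, rfl⟩)
    rw [hA]; exact Or.inl (Or.inl ⟨_, h2, rfl⟩)
  set x : ℕ → ℂ := fun n => p + (a - p) * (1/8 : ℂ)^n with hx
  have hxmem : ∀ n, x n ∈ A := by
    intro n
    induction n with
    | zero => simpa [hx] using ha
    | succ n ih =>
      have : x (n+1) = g (x n) := by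
        simp only [hx, hg, g2_eq, hp]; ring
      rw [this]; exact hgA _ ih
  have htend : Filter.Tendsto x Filter.atTop (nhds p) := by
    have h8 : ‖(1/8 : ℂ)‖ < 1 := by
      rw [norm_div, norm_one]
      simp
      norm_num
    have := (tendsto_pow_atTop_nhds_zero_of_norm_lt_one h8).const_mul (a - p)
    have h2 : Filter.Tendsto (fun n => p + (a - p) * (1/8:ℂ)^n) Filter.atTop
        (nhds (p + (a - p) * 0)) := tendsto_const_nhds.add this
    simpa [hx] using h2
  exact hAc.isClosed.mem_of_tendsto htend (Filter.Eventually.of_forall hxmem)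
private lemma beta1_im : ((-7 - Complex.I)/16 : ℂ).im = -(1/16) := by
  norm_num [Complex.div_im]
private lemma beta2_im : ((-7 - 7*Complex.I)/16 : ℂ).im = -(7/16) := by
  norm_num [Complex.div_im]
private lemma beta3_im : ((-7 + 7*Complex.I)/16 : ℂ).im = 7/16 := by
  norm_num [Complex.div_im]
private lemma beta4_im : ((-7 + Complex.I)/16 : ℂ).im = 1/16 := by
  norm_num [Complex.div_im]

/-- The boundary set `K = A ∩ k(A)`, `k(z) = -z - 1`, satisfies the graph-directed
equation `K = f₁₁₂(K) ∪ f₁₂₃(K) ∪ f₃₁₂(K) ∪ f₃₂₃(K)`. -/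
theorem fsq_boundary_K_graph_directed
    (A : Set ℂ) (hAne : A.Nonempty) (hAc : IsCompact A)
    (hA : A = fsq₁ '' A ∪ fsq₂ '' A ∪ fsq₃ '' A)
    (k : ℂ → ℂ) (hk : ∀ z, k z = -z - 1)
    (K : Set ℂ) (hK : K = A ∩ k '' A) :
    K = (fsq₁ ∘ fsq₁ ∘ fsq₂) '' K ∪ (fsq₁ ∘ fsq₂ ∘ fsq₃) '' K ∪
        (fsq₃ ∘ fsq₁ ∘ fsq₂) '' K ∪ (fsq₃ ∘ fsq₂ ∘ fsq₃) '' K := by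
  have hb := sq_bound hAne hAc hA
  have s1 : ∀ u ∈ A, fsq₁ u ∈ A := fun u hu => by
    rw [hA]; exact Or.inl (Or.inl ⟨u, hu, rfl⟩)
  have s2 : ∀ u ∈ A, fsq₂ u ∈ A := fun u hu => by
    rw [hA]; exact Or.inl (Or.inr ⟨u, hu, rfl⟩)
  have s3 : ∀ u ∈ A, fsq₃ u ∈ A := fun u hu => by
    rw [hA]; exact Or.inr ⟨u, hu, rfl⟩
  have conj14 : ∀ w, fsq₁ (fsq₁ (fsq₂ (k w))) = k (fsq₃ (fsq₂ (fsq₃ w))) := by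
    intro w; rw [hk, hk, g1_eq, g4_eq]; ring
  have conj23 : ∀ w, fsq₁ (fsq₂ (fsq₃ (k w))) = k (fsq₃ (fsq₁ (fsq₂ w))) := by
    intro w; rw [hk, hk, g2_eq, g3_eq]; ring
  have conj32 : ∀ w, fsq₃ (fsq₁ (fsq₂ (k w))) = k (fsq₁ (fsq₂ (fsq₃ w))) := by
    intro w; rw [hk, hk, g3_eq, g2_eq]; ring
  have conj41 : ∀ w, fsq₃ (fsq₂ (fsq₃ (k w))) = k (fsq₁ (fsq₁ (fsq₂ w))) := by
    intro w; rw [hk, hk, g4_eq, g1_eq]; ring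
  -- the corner point
  have hp : -(1 + Complex.I)/2 ∈ A := corner_mem hAne hAc hA
  have hpK : -(1 + Complex.I)/2 ∈ K := by
    rw [hK]
    refine ⟨hp, fsq₃ (-(1 + Complex.I)/2), s3 _ hp, ?_⟩
    rw [hk]
    simp only [fsq₃]
    linear_combination (-(1:ℂ)/4) * Complex.I_sq
  have hcorner : (-(1/2) : ℂ) ∈ (fsq₃ ∘ fsq₂ ∘ fsq₃) '' K := by
    refine ⟨-(1 + Complex.I)/2, hpK, ?_⟩
    simp only [Function.comp_apply]
    rw [g4_eq]
    ring
  apply Set.Subset.antisymm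
  · -- forward inclusion
    intro z hz
    rw [hK] at hz
    obtain ⟨hzA, b, hbA, hkb⟩ := hz
    have hzb : z = -b - 1 := by rw [← hkb, hk]
    have hz1 := abs_le.mp (hb z hzA).1
    have hb1 := abs_le.mp (hb b hbA).1
    have hzre' : z.re = -b.re - 1 := by rw [hzb]; simp
    have hzre : z.re = -(1/2) := by linarith
    have hbre : b.re = -(1/2) := by linarith
    have hzim : z.im = -b.im := by rw [hzb]; simp
    have hzE := left_edge hA hb z hzA hzre
    have hbE := left_edge hA hb b hbA hbre
    rcases hzE with ((⟨u, huA, hequ⟩ | ⟨u, huA, hequ⟩) | ⟨u, huA, hequ⟩) | ⟨u, huA, hequ⟩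
    · -- z in g1 cell
      simp only [Function.comp_apply] at hequ
      rw [g1_eq] at hequ
      rcases hbE with ((⟨w, hwA, heqw⟩ | ⟨w, hwA, heqw⟩) | ⟨w, hwA, heqw⟩) | ⟨w, hwA, heqw⟩
      · simp only [Function.comp_apply] at heqw
        rw [g1_eq] at heqw
        have him1 : z.im = u.im/8 + ((-7 - Complex.I)/16 : ℂ).im := by rw [← hequ, gg_im]
        have him2 : b.im = w.im/8 + ((-7 - Complex.I)/16 : ℂ).im := by rw [← heqw, gg_im]
        rw [beta1_im] at him1
        rw [beta1_im] at him2
        have hu2 := abs_le.mp (hb u huA).2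
        have hw2 := abs_le.mp (hb w hwA).2
        have hzim0 : z.im = 0 := by linarith
        have hzval : z = (-(1/2) : ℂ) := Complex.ext (by rw [hzre]; norm_num) (by rw [hzim0]; norm_num)
        rw [hzval]
        exact Or.inr hcorner
      · simp only [Function.comp_apply] at heqw
        rw [g2_eq] at heqw
        have him1 : z.im = u.im/8 + ((-7 - Complex.I)/16 : ℂ).im := by rw [← hequ, gg_im]
        have him2 : b.im = w.im/8 + ((-7 - 7*Complex.I)/16 : ℂ).im := by rw [← heqw, gg_im]
        rw [beta1_im] at him1
        rw [beta2_im] at him2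
        have hu2 := abs_le.mp (hb u huA).2
        have hw2 := abs_le.mp (hb w hwA).2
        exfalso; linarith
      · simp only [Function.comp_apply] at heqw
        rw [g3_eq] at heqw
        have him1 : z.im = u.im/8 + ((-7 - Complex.I)/16 : ℂ).im := by rw [← hequ, gg_im]
        have him2 : b.im = w.im/8 + ((-7 + 7*Complex.I)/16 : ℂ).im := by rw [← heqw, gg_im]
        rw [beta1_im] at him1
        rw [beta3_im] at him2
        have hu2 := abs_le.mp (hb u huA).2
        have hw2 := abs_le.mp (hb w hwA).2
        exfalso; linarith
      · simp only [Function.comp_apply] at heqw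
        rw [g4_eq] at heqw
        have him1 : z.im = u.im/8 + ((-7 - Complex.I)/16 : ℂ).im := by rw [← hequ, gg_im]
        have him2 : b.im = w.im/8 + ((-7 + Complex.I)/16 : ℂ).im := by rw [← heqw, gg_im]
        rw [beta1_im] at him1
        rw [beta4_im] at him2
        have hu2 := abs_le.mp (hb u huA).2
        have hw2 := abs_le.mp (hb w hwA).2
        have huw : u = -w - 1 := by linear_combination 8*hequ + 8*heqw + 8*hzb
        exact Or.inl (Or.inl (Or.inl ⟨u, by rw [hK]; exact ⟨huA, w, hwA, by rw [hk]; linear_combination -huw⟩, by simp only [Function.comp_apply]; rw [g1_eq]; exact hequ⟩))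
    · -- z in g2 cell
      simp only [Function.comp_apply] at hequ
      rw [g2_eq] at hequ
      rcases hbE with ((⟨w, hwA, heqw⟩ | ⟨w, hwA, heqw⟩) | ⟨w, hwA, heqw⟩) | ⟨w, hwA, heqw⟩
      · simp only [Function.comp_apply] at heqw
        rw [g1_eq] at heqw
        have him1 : z.im = u.im/8 + ((-7 - 7*Complex.I)/16 : ℂ).im := by rw [← hequ, gg_im]
        have him2 : b.im = w.im/8 + ((-7 - Complex.I)/16 : ℂ).im := by rw [← heqw, gg_im]
        rw [beta2_im] at him1
        rw [beta1_im] at him2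
        have hu2 := abs_le.mp (hb u huA).2
        have hw2 := abs_le.mp (hb w hwA).2
        exfalso; linarith
      · simp only [Function.comp_apply] at heqw
        rw [g2_eq] at heqw
        have him1 : z.im = u.im/8 + ((-7 - 7*Complex.I)/16 : ℂ).im := by rw [← hequ, gg_im]
        have him2 : b.im = w.im/8 + ((-7 - 7*Complex.I)/16 : ℂ).im := by rw [← heqw, gg_im]
        rw [beta2_im] at him1
        rw [beta2_im] at him2
        have hu2 := abs_le.mp (hb u huA).2
        have hw2 := abs_le.mp (hb w hwA).2
        exfalso; linarith
      · simp only [Function.comp_apply] at heqw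
        rw [g3_eq] at heqw
        have him1 : z.im = u.im/8 + ((-7 - 7*Complex.I)/16 : ℂ).im := by rw [← hequ, gg_im]
        have him2 : b.im = w.im/8 + ((-7 + 7*Complex.I)/16 : ℂ).im := by rw [← heqw, gg_im]
        rw [beta2_im] at him1
        rw [beta3_im] at him2
        have hu2 := abs_le.mp (hb u huA).2
        have hw2 := abs_le.mp (hb w hwA).2
        have huw : u = -w - 1 := by linear_combination 8*hequ + 8*heqw + 8*hzb
        exact Or.inl (Or.inl (Or.inr ⟨u, by rw [hK]; exact ⟨huA, w, hwA, by rw [hk]; linear_combination -huw⟩, by simp only [Function.comp_apply]; rw [g2_eq]; exact hequ⟩))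
      · simp only [Function.comp_apply] at heqw
        rw [g4_eq] at heqw
        have him1 : z.im = u.im/8 + ((-7 - 7*Complex.I)/16 : ℂ).im := by rw [← hequ, gg_im]
        have him2 : b.im = w.im/8 + ((-7 + Complex.I)/16 : ℂ).im := by rw [← heqw, gg_im]
        rw [beta2_im] at him1
        rw [beta4_im] at him2
        have hu2 := abs_le.mp (hb u huA).2
        have hw2 := abs_le.mp (hb w hwA).2
        exfalso; linarith
    · -- z in g3 cell
      simp only [Function.comp_apply] at hequ
      rw [g3_eq] at hequ
      rcases hbE with ((⟨w, hwA, heqw⟩ | ⟨w, hwA, heqw⟩) | ⟨w, hwA, heqw⟩) | ⟨w, hwA, heqw⟩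
      · simp only [Function.comp_apply] at heqw
        rw [g1_eq] at heqw
        have him1 : z.im = u.im/8 + ((-7 + 7*Complex.I)/16 : ℂ).im := by rw [← hequ, gg_im]
        have him2 : b.im = w.im/8 + ((-7 - Complex.I)/16 : ℂ).im := by rw [← heqw, gg_im]
        rw [beta3_im] at him1
        rw [beta1_im] at him2
        have hu2 := abs_le.mp (hb u huA).2
        have hw2 := abs_le.mp (hb w hwA).2
        exfalso; linarith
      · simp only [Function.comp_apply] at heqw
        rw [g2_eq] at heqw
        have him1 : z.im = u.im/8 + ((-7 + 7*Complex.I)/16 : ℂ).im := by rw [← hequ, gg_im]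
        have him2 : b.im = w.im/8 + ((-7 - 7*Complex.I)/16 : ℂ).im := by rw [← heqw, gg_im]
        rw [beta3_im] at him1
        rw [beta2_im] at him2
        have hu2 := abs_le.mp (hb u huA).2
        have hw2 := abs_le.mp (hb w hwA).2
        have huw : u = -w - 1 := by linear_combination 8*hequ + 8*heqw + 8*hzb
        exact Or.inl (Or.inr ⟨u, by rw [hK]; exact ⟨huA, w, hwA, by rw [hk]; linear_combination -huw⟩, by simp only [Function.comp_apply]; rw [g3_eq]; exact hequ⟩)
      · simp only [Function.comp_apply] at heqw
        rw [g3_eq] at heqw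
        have him1 : z.im = u.im/8 + ((-7 + 7*Complex.I)/16 : ℂ).im := by rw [← hequ, gg_im]
        have him2 : b.im = w.im/8 + ((-7 + 7*Complex.I)/16 : ℂ).im := by rw [← heqw, gg_im]
        rw [beta3_im] at him1
        rw [beta3_im] at him2
        have hu2 := abs_le.mp (hb u huA).2
        have hw2 := abs_le.mp (hb w hwA).2
        exfalso; linarith
      · simp only [Function.comp_apply] at heqw
        rw [g4_eq] at heqw
        have him1 : z.im = u.im/8 + ((-7 + 7*Complex.I)/16 : ℂ).im := by rw [← hequ, gg_im]
        have him2 : b.im = w.im/8 + ((-7 + Complex.I)/16 : ℂ).im := by rw [← heqw, gg_im]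
        rw [beta3_im] at him1
        rw [beta4_im] at him2
        have hu2 := abs_le.mp (hb u huA).2
        have hw2 := abs_le.mp (hb w hwA).2
        exfalso; linarith
    · -- z in g4 cell
      simp only [Function.comp_apply] at hequ
      rw [g4_eq] at hequ
      rcases hbE with ((⟨w, hwA, heqw⟩ | ⟨w, hwA, heqw⟩) | ⟨w, hwA, heqw⟩) | ⟨w, hwA, heqw⟩
      · simp only [Function.comp_apply] at heqw
        rw [g1_eq] at heqw
        have him1 : z.im = u.im/8 + ((-7 + Complex.I)/16 : ℂ).im := by rw [← hequ, gg_im]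
        have him2 : b.im = w.im/8 + ((-7 - Complex.I)/16 : ℂ).im := by rw [← heqw, gg_im]
        rw [beta4_im] at him1
        rw [beta1_im] at him2
        have hu2 := abs_le.mp (hb u huA).2
        have hw2 := abs_le.mp (hb w hwA).2
        have huw : u = -w - 1 := by linear_combination 8*hequ + 8*heqw + 8*hzb
        exact Or.inr ⟨u, by rw [hK]; exact ⟨huA, w, hwA, by rw [hk]; linear_combination -huw⟩, by simp only [Function.comp_apply]; rw [g4_eq]; exact hequ⟩
      · simp only [Function.comp_apply] at heqw
        rw [g2_eq] at heqw
        have him1 : z.im = u.im/8 + ((-7 + Complex.I)/16 : ℂ).im := by rw [← hequ, gg_im]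
        have him2 : b.im = w.im/8 + ((-7 - 7*Complex.I)/16 : ℂ).im := by rw [← heqw, gg_im]
        rw [beta4_im] at him1
        rw [beta2_im] at him2
        have hu2 := abs_le.mp (hb u huA).2
        have hw2 := abs_le.mp (hb w hwA).2
        exfalso; linarith
      · simp only [Function.comp_apply] at heqw
        rw [g3_eq] at heqw
        have him1 : z.im = u.im/8 + ((-7 + Complex.I)/16 : ℂ).im := by rw [← hequ, gg_im]
        have him2 : b.im = w.im/8 + ((-7 + 7*Complex.I)/16 : ℂ).im := by rw [← heqw, gg_im]
        rw [beta4_im] at him1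
        rw [beta3_im] at him2
        have hu2 := abs_le.mp (hb u huA).2
        have hw2 := abs_le.mp (hb w hwA).2
        exfalso; linarith
      · simp only [Function.comp_apply] at heqw
        rw [g4_eq] at heqw
        have him1 : z.im = u.im/8 + ((-7 + Complex.I)/16 : ℂ).im := by rw [← hequ, gg_im]
        have him2 : b.im = w.im/8 + ((-7 + Complex.I)/16 : ℂ).im := by rw [← heqw, gg_im]
        rw [beta4_im] at him1
        rw [beta4_im] at him2
        have hu2 := abs_le.mp (hb u huA).2
        have hw2 := abs_le.mp (hb w hwA).2
        have hzim0 : z.im = 0 := by linarith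
        have hzval : z = (-(1/2) : ℂ) := Complex.ext (by rw [hzre]; norm_num) (by rw [hzim0]; norm_num)
        rw [hzval]
        exact Or.inr hcorner
  · -- reverse inclusion
    intro z hz
    rw [hK]
    rcases hz with ((⟨u, hu, rfl⟩ | ⟨u, hu, rfl⟩) | ⟨u, hu, rfl⟩) | ⟨u, hu, rfl⟩ <;>
      rw [hK] at hu <;> obtain ⟨huA, b, hbA, hkb⟩ := hu <;>
      simp only [Function.comp_apply]
    · exact ⟨s1 _ (s1 _ (s2 _ huA)), fsq₃ (fsq₂ (fsq₃ b)), s3 _ (s2 _ (s3 _ hbA)),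
        by rw [← conj14 b, hkb]⟩
    · exact ⟨s1 _ (s2 _ (s3 _ huA)), fsq₃ (fsq₁ (fsq₂ b)), s3 _ (s1 _ (s2 _ hbA)),
        by rw [← conj23 b, hkb]⟩
    · exact ⟨s3 _ (s1 _ (s2 _ huA)), fsq₁ (fsq₂ (fsq₃ b)), s1 _ (s2 _ (s3 _ hbA)),
        by rw [← conj32 b, hkb]⟩
    · exact ⟨s3 _ (s2 _ (s3 _ huA)), fsq₁ (fsq₁ (fsq₂ b)), s1 _ (s1 _ (s2 _ hbA)),
        by rw [← conj41 b, hkb]⟩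
end
end

section
/- Let h : ℂ → ℂ be the map h(z) = iz − 1 and set B = A ∩ h(A). Then B satisfies the self-similar equation B = f_{312}(B) ∪ f_{123}(B), where f_{w_1 w_2 w_3} = f_{w_1} ∘ f_{w_2} ∘ f_{w_3} (two similitudes of contraction ratio 1/8). -/
open Set Complex

noncomputable section

lemma rep1 (z : ℂ) : fsq₁ z = ⟨z.im/2 - 1/4, -z.re/2 - 1/4⟩ := by
  apply Complex.ext <;> simp [fsq₁, Complex.div_re, Complex.div_im, Complex.normSq] <;> ring
lemma rep2 (z : ℂ) : fsq₂ z = ⟨-z.re/2 + 1/4, -z.im/2 - 1/4⟩ := by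
  apply Complex.ext <;> simp [fsq₂, Complex.div_re, Complex.div_im, Complex.normSq] <;> ring
lemma rep3 (z : ℂ) : fsq₃ z = ⟨z.im/2 - 1/4, -z.re/2 + 1/4⟩ := by
  apply Complex.ext <;> simp [fsq₃, Complex.div_re, Complex.div_im, Complex.normSq] <;> ring

lemma c112 (z : ℂ) : fsq₁ (fsq₁ (fsq₂ z)) = ⟨z.re/8 - 7/16, z.im/8 - 1/16⟩ := by
  rw [rep2, rep1, rep1]; apply Complex.ext <;> simp <;> ring
lemma c123 (z : ℂ) : fsq₁ (fsq₂ (fsq₃ z)) = ⟨z.re/8 - 7/16, z.im/8 - 7/16⟩ := by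
  rw [rep3, rep2, rep1]; apply Complex.ext <;> simp <;> ring
lemma c312 (z : ℂ) : fsq₃ (fsq₁ (fsq₂ z)) = ⟨z.re/8 - 7/16, z.im/8 + 7/16⟩ := by
  rw [rep2, rep1, rep3]; apply Complex.ext <;> simp <;> ring
lemma c323 (z : ℂ) : fsq₃ (fsq₂ (fsq₃ z)) = ⟨z.re/8 - 7/16, z.im/8 + 1/16⟩ := by
  rw [rep3, rep2, rep3]; apply Complex.ext <;> simp <;> ring
lemma c12 (z : ℂ) : fsq₁ (fsq₂ z) = ⟨-z.im/4 - 3/8, z.re/4 - 3/8⟩ := by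
  rw [rep2, rep1]; apply Complex.ext <;> simp <;> ring
lemma c23 (z : ℂ) : fsq₂ (fsq₃ z) = ⟨-z.im/4 + 3/8, z.re/4 - 3/8⟩ := by
  rw [rep3, rep2]; apply Complex.ext <;> simp <;> ring
lemma c231 (z : ℂ) : fsq₂ (fsq₃ (fsq₁ z)) = ⟨z.re/8 + 7/16, z.im/8 - 7/16⟩ := by
  rw [rep1, rep3, rep2]; apply Complex.ext <;> simp <;> ring

lemma fixed_mem {A : Set ℂ} (hAne : A.Nonempty) (hAc : IsCompact A)
    (g : ℂ → ℂ) (hg : ∀ z ∈ A, g z ∈ A) (p : ℂ) (hp : ∀ z, g z = p + (z - p)/8) :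
    p ∈ A := by
  obtain ⟨a, ha⟩ := hAne
  have hmem : ∀ n, g^[n] a ∈ A := by
    intro n; induction n with
    | zero => exact ha
    | succ n ih => rw [Function.iterate_succ_apply']; exact hg _ ih
  have hform : ∀ n, g^[n] a = p + (a - p) * (1/8 : ℂ)^n := by
    intro n; induction n with
    | zero => simp
    | succ n ih => rw [Function.iterate_succ_apply', ih, hp]; ring
  have hlim : Filter.Tendsto (fun n => g^[n] a) Filter.atTop (nhds p) := by
    simp only [hform]
    have h8 : ‖(1/8 : ℂ)‖ < 1 := by rw [norm_div]; simp; norm_num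
    have := ((tendsto_pow_atTop_nhds_zero_of_norm_lt_one h8).const_mul (a - p)).const_add p
    simpa using this
  exact hAc.isClosed.mem_of_tendsto hlim (Filter.Eventually.of_forall hmem)


set_option maxHeartbeats 2000000 in
/-- The boundary set `B = A ∩ h(A)`, `h(z) = iz - 1`, satisfies the self-similar
equation `B = f₃₁₂(B) ∪ f₁₂₃(B)`. -/
theorem fsq_boundary_B_self_similar
    (A : Set ℂ) (hAne : A.Nonempty) (hAc : IsCompact A)
    (hA : A = fsq₁ '' A ∪ fsq₂ '' A ∪ fsq₃ '' A)
    (h : ℂ → ℂ) (hh : ∀ z, h z = Complex.I * z - 1)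
    (B : Set ℂ) (hB : B = A ∩ h '' A) :
    B = (fsq₃ ∘ fsq₁ ∘ fsq₂) '' B ∪ (fsq₁ ∘ fsq₂ ∘ fsq₃) '' B := by
  -- basic membership maps
  have m1 : ∀ z ∈ A, fsq₁ z ∈ A := by intro z hz; rw [hA]; exact Or.inl (Or.inl ⟨z, hz, rfl⟩)
  have m2 : ∀ z ∈ A, fsq₂ z ∈ A := by intro z hz; rw [hA]; exact Or.inl (Or.inr ⟨z, hz, rfl⟩)
  have m3 : ∀ z ∈ A, fsq₃ z ∈ A := by intro z hz; rw [hA]; exact Or.inr ⟨z, hz, rfl⟩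
  have hrep : ∀ b : ℂ, h b = ⟨-b.im - 1, b.re⟩ := by
    intro b; rw [hh]; apply Complex.ext <;> simp
  -- bound: A is inside the square [-1/2,1/2]²
  have bound : ∀ x ∈ A, |x.re| ≤ 1/2 ∧ |x.im| ≤ 1/2 := by
    have hcont : Continuous fun z : ℂ => max |z.re| |z.im| :=
      ((continuous_re.abs).max (continuous_im.abs))
    obtain ⟨x₀, hx₀A, hmax'⟩ := hAc.exists_isMaxOn hAne hcont.continuousOn
    have hmax : ∀ y ∈ A, max |y.re| |y.im| ≤ max |x₀.re| |x₀.im| := fun y hy => hmax' hy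
    set M := max |x₀.re| |x₀.im| with hM
    have hM0 : (0:ℝ) ≤ M := le_trans (abs_nonneg _) (le_max_left _ _)
    have key : M ≤ 1/2 := by
      have hx := hx₀A
      rw [hA] at hx
      have main : ∀ y ∈ A, ∀ i ∈ ({1,2,3} : Finset ℕ), x₀ = (if i = 1 then fsq₁ else if i = 2 then fsq₂ else fsq₃) y → M ≤ 1/2 := by
        intro y hy i _ hxy
        have h1 : |y.re| ≤ M := le_trans (le_max_left _ _) (hmax y hy)
        have h2 : |y.im| ≤ M := le_trans (le_max_right _ _) (hmax y hy)
        rw [abs_le] at h1 h2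
        have : |x₀.re| ≤ M/2 + 1/4 ∧ |x₀.im| ≤ M/2 + 1/4 := by
          split_ifs at hxy with e1 e2
          · rw [hxy, rep1]; constructor <;> (rw [abs_le]; constructor <;> (simp; linarith))
          · rw [hxy, rep2]; constructor <;> (rw [abs_le]; constructor <;> (simp; linarith))
          · rw [hxy, rep3]; constructor <;> (rw [abs_le]; constructor <;> (simp; linarith))
        have hMle : M ≤ M/2 + 1/4 := by
          rw [hM, max_le_iff]; exact this
        linarith
      rcases hx with (⟨y, hy, hxy⟩ | ⟨y, hy, hxy⟩) | ⟨y, hy, hxy⟩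
      · exact main y hy 1 (by simp) (by simp [hxy.symm])
      · exact main y hy 2 (by simp) (by simp [hxy.symm])
      · exact main y hy 3 (by simp) (by simp [hxy.symm])
    intro x hx
    exact ⟨le_trans (le_trans (le_max_left _ _) (hmax x hx)) key,
           le_trans (le_trans (le_max_right _ _) (hmax x hx)) key⟩
  -- edge lemmas
  have edgeL : ∀ x ∈ A, x.re = -(1/2) → ∃ y ∈ A, y.im = -(1/2) ∧ (x = fsq₁ y ∨ x = fsq₃ y) := by
    intro x hx hre
    rw [hA] at hx
    rcases hx with (⟨y, hy, hxy⟩ | ⟨y, hy, hxy⟩) | ⟨y, hy, hxy⟩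
    · refine ⟨y, hy, ?_, Or.inl hxy.symm⟩
      rw [← hxy, rep1] at hre; simp at hre; linarith
    · exfalso; obtain ⟨hb, _⟩ := bound y hy; rw [abs_le] at hb
      rw [← hxy, rep2] at hre; simp at hre; linarith
    · refine ⟨y, hy, ?_, Or.inr hxy.symm⟩
      rw [← hxy, rep3] at hre; simp at hre; linarith
  have edgeR : ∀ x ∈ A, x.re = 1/2 → ∃ y ∈ A, y.re = -(1/2) ∧ x = fsq₂ y := by
    intro x hx hre
    rw [hA] at hx
    rcases hx with (⟨y, hy, hxy⟩ | ⟨y, hy, hxy⟩) | ⟨y, hy, hxy⟩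
    · exfalso; obtain ⟨_, hb⟩ := bound y hy; rw [abs_le] at hb
      rw [← hxy, rep1] at hre; simp at hre; linarith
    · refine ⟨y, hy, ?_, hxy.symm⟩
      rw [← hxy, rep2] at hre; simp at hre; linarith
    · exfalso; obtain ⟨_, hb⟩ := bound y hy; rw [abs_le] at hb
      rw [← hxy, rep3] at hre; simp at hre; linarith
  have edgeT : ∀ x ∈ A, x.im = 1/2 → ∃ y ∈ A, y.re = -(1/2) ∧ x = fsq₃ y := by
    intro x hx him
    rw [hA] at hx
    rcases hx with (⟨y, hy, hxy⟩ | ⟨y, hy, hxy⟩) | ⟨y, hy, hxy⟩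
    · exfalso; obtain ⟨hb, _⟩ := bound y hy; rw [abs_le] at hb
      rw [← hxy, rep1] at him; simp at him; linarith
    · exfalso; obtain ⟨_, hb⟩ := bound y hy; rw [abs_le] at hb
      rw [← hxy, rep2] at him; simp at him; linarith
    · refine ⟨y, hy, ?_, hxy.symm⟩
      rw [← hxy, rep3] at him; simp at him; linarith
  have edgeB : ∀ x ∈ A, x.im = -(1/2) →
      ∃ y ∈ A, (y.re = 1/2 ∧ x = fsq₁ y) ∨ (y.im = 1/2 ∧ x = fsq₂ y) := by
    intro x hx him
    rw [hA] at hx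
    rcases hx with (⟨y, hy, hxy⟩ | ⟨y, hy, hxy⟩) | ⟨y, hy, hxy⟩
    · refine ⟨y, hy, Or.inl ⟨?_, hxy.symm⟩⟩
      rw [← hxy, rep1] at him; simp at him; linarith
    · refine ⟨y, hy, Or.inr ⟨?_, hxy.symm⟩⟩
      rw [← hxy, rep2] at him; simp at him; linarith
    · exfalso; obtain ⟨hb, _⟩ := bound y hy; rw [abs_le] at hb
      rw [← hxy, rep3] at him; simp at him; linarith
  -- three-level left-edge decomposition
  have edgeL3 : ∀ x ∈ A, x.re = -(1/2) → ∃ y ∈ A, y.re = -(1/2) ∧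
      (x = fsq₁ (fsq₁ (fsq₂ y)) ∨ x = fsq₁ (fsq₂ (fsq₃ y)) ∨
       x = fsq₃ (fsq₁ (fsq₂ y)) ∨ x = fsq₃ (fsq₂ (fsq₃ y))) := by
    intro x hx hre
    obtain ⟨y₁, hy₁, him₁, hc₁⟩ := edgeL x hx hre
    obtain ⟨y₂, hy₂, hc₂⟩ := edgeB y₁ hy₁ him₁
    rcases hc₂ with ⟨hre₂, he₂⟩ | ⟨him₂, he₂⟩
    · obtain ⟨y₃, hy₃, hre₃, he₃⟩ := edgeR y₂ hy₂ hre₂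
      rcases hc₁ with he₁ | he₁
      · exact ⟨y₃, hy₃, hre₃, Or.inl (by rw [he₁, he₂, he₃])⟩
      · exact ⟨y₃, hy₃, hre₃, Or.inr (Or.inr (Or.inl (by rw [he₁, he₂, he₃])))⟩
    · obtain ⟨y₃, hy₃, hre₃, he₃⟩ := edgeT y₂ hy₂ him₂
      rcases hc₁ with he₁ | he₁
      · exact ⟨y₃, hy₃, hre₃, Or.inr (Or.inl (by rw [he₁, he₂, he₃]))⟩
      · exact ⟨y₃, hy₃, hre₃, Or.inr (Or.inr (Or.inr (by rw [he₁, he₂, he₃])))⟩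
  -- bottom-edge decomposition
  have edgeB2 : ∀ x ∈ A, x.im = -(1/2) → ∃ y ∈ A, y.re = -(1/2) ∧
      (x = fsq₁ (fsq₂ y) ∨ x = fsq₂ (fsq₃ y)) := by
    intro x hx him
    obtain ⟨y₁, hy₁, hc⟩ := edgeB x hx him
    rcases hc with ⟨hre₁, he₁⟩ | ⟨him₁, he₁⟩
    · obtain ⟨y₂, hy₂, hre₂, he₂⟩ := edgeR y₁ hy₁ hre₁
      exact ⟨y₂, hy₂, hre₂, Or.inl (by rw [he₁, he₂])⟩
    · obtain ⟨y₂, hy₂, hre₂, he₂⟩ := edgeT y₁ hy₁ him₁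
      exact ⟨y₂, hy₂, hre₂, Or.inr (by rw [he₁, he₂])⟩
  -- corner points
  have cornerTL : (⟨-(1/2), 1/2⟩ : ℂ) ∈ A := by
    refine fixed_mem hAne hAc (fun z => fsq₃ (fsq₁ (fsq₂ z))) (fun z hz => m3 _ (m1 _ (m2 _ hz))) _ (fun z => ?_)
    show fsq₃ (fsq₁ (fsq₂ z)) = _
    rw [c312]; apply Complex.ext <;> simp [Complex.div_re, Complex.div_im, Complex.normSq] <;> ring
  have cornerBL : (⟨-(1/2), -(1/2)⟩ : ℂ) ∈ A := by
    refine fixed_mem hAne hAc (fun z => fsq₁ (fsq₂ (fsq₃ z))) (fun z hz => m1 _ (m2 _ (m3 _ hz))) _ (fun z => ?_)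
    show fsq₁ (fsq₂ (fsq₃ z)) = _
    rw [c123]; apply Complex.ext <;> simp [Complex.div_re, Complex.div_im, Complex.normSq] <;> ring
  have cornerBR : (⟨1/2, -(1/2)⟩ : ℂ) ∈ A := by
    refine fixed_mem hAne hAc (fun z => fsq₂ (fsq₃ (fsq₁ z))) (fun z hz => m2 _ (m3 _ (m1 _ hz))) _ (fun z => ?_)
    show fsq₂ (fsq₃ (fsq₁ z)) = _
    rw [c231]; apply Complex.ext <;> simp [Complex.div_re, Complex.div_im, Complex.normSq] <;> ring
  -- main proof
  ext x
  constructor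
  · -- hard direction
    intro hx
    rw [hB] at hx
    obtain ⟨hxA, a, haA, hax⟩ := hx
    have hxrep : x = ⟨-a.im - 1, a.re⟩ := by rw [← hax, hrep]
    obtain ⟨hbxr, hbxi⟩ := bound x hxA
    obtain ⟨hbar, hbai⟩ := bound a haA
    rw [abs_le] at hbxr hbxi hbar hbai
    have haim : a.im = -(1/2) := by
      have : x.re = -a.im - 1 := by rw [hxrep]
      linarith [hbxr.1, hbai.1]
    have hxre : x.re = -(1/2) := by rw [hxrep]; simp [haim]; ring
    have hxim : x.im = a.re := by rw [hxrep]
    obtain ⟨y, hyA, hyre, hcases⟩ := edgeL3 x hxA hxre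
    obtain ⟨hbyr, hbyi⟩ := bound y hyA; rw [abs_le] at hbyr hbyi
    obtain ⟨u, huA, hure, hacases⟩ := edgeB2 a haA haim
    obtain ⟨hbur, hbui⟩ := bound u huA; rw [abs_le] at hbur hbui
    -- the value of a.re in the two bottom cases
    have hare : a.re = -u.im/4 - 3/8 ∨ a.re = -u.im/4 + 3/8 := by
      rcases hacases with he | he
      · left; rw [he, c12]
      · right; rw [he, c23]
    -- key claim builder: given y ∈ B, conclude for each main branch
    have mkB : ∀ w : ℂ, w ∈ A → (⟨w.im, -(1/2)⟩ : ℂ) ∈ A → w.re = -(1/2) → w ∈ B := by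
      intro w hwA hbA hwre
      rw [hB]
      refine ⟨hwA, ⟨w.im, -(1/2)⟩, hbA, ?_⟩
      rw [hrep]; apply Complex.ext <;> simp [hwre] <;> norm_num
    rcases hcases with he | he | he | he
    · -- case 112 : impossible
      exfalso
      have : x.im = y.im/8 - 1/16 := by rw [he, c112]
      rcases hare with ha' | ha' <;> rw [hxim, ha'] at this <;> linarith [hbyi.1, hbyi.2, hbui.1, hbui.2]
    · -- case 123 : x = g₂ y
      have hxim' : x.im = y.im/8 - 7/16 := by rw [he, c123]
      -- bottom branch must be f₁f₂
      have ha' : a.re = -u.im/4 - 3/8 := by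
        rcases hare with ha' | ha'
        · exact ha'
        · exfalso; rw [hxim, ha'] at hxim'; linarith [hbyi.2, hbui.2]
      have hueq : u.im = -y.im/2 + 1/4 := by rw [hxim, ha'] at hxim'; linarith
      -- decompose u on the left edge
      obtain ⟨y', hy'A, hy're, hccases⟩ := edgeL3 u huA hure
      obtain ⟨hby'r, hby'i⟩ := bound y' hy'A; rw [abs_le] at hby'r hby'i
      have hbA : (⟨y.im, -(1/2)⟩ : ℂ) ∈ A := by
        rcases hccases with hc | hc | hc | hc
        · -- u = 112 y' : forces u.im = 0, y.im = 1/2, corner BR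
          have hui : u.im = y'.im/8 - 1/16 := by rw [hc, c112]
          have hyim : y.im = 1/2 := by
            have h1 : u.im ≤ 0 := by rw [hui]; linarith [hby'i.2]
            have h2 : u.im ≥ 0 := by rw [hueq]; linarith [hbyi.2]
            rw [hueq] at h1 h2; linarith
          rw [hyim]; exact cornerBR
        · -- u = 123 y' : impossible
          exfalso
          have hui : u.im = y'.im/8 - 7/16 := by rw [hc, c123]
          rw [hueq] at hui; linarith [hby'i.1, hbyi.2]
        · -- u = 312 y' : b = f₁f₂ y'
          have hui : u.im = y'.im/8 + 7/16 := by rw [hc, c312]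
          have : (⟨y.im, -(1/2)⟩ : ℂ) = fsq₁ (fsq₂ y') := by
            rw [c12]; apply Complex.ext <;> simp [hy're]
            · rw [hueq] at hui; linarith
            · linarith
          rw [this]; exact m1 _ (m2 _ hy'A)
        · -- u = 323 y' : b = f₂f₃ y'
          have hui : u.im = y'.im/8 + 1/16 := by rw [hc, c323]
          have : (⟨y.im, -(1/2)⟩ : ℂ) = fsq₂ (fsq₃ y') := by
            rw [c23]; apply Complex.ext <;> simp [hy're]
            · rw [hueq] at hui; linarith
            · linarith
          rw [this]; exact m2 _ (m3 _ hy'A)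
      exact Or.inr ⟨y, mkB y hyA hbA hyre, he.symm⟩
    · -- case 312 : x = g₁ y
      have hxim' : x.im = y.im/8 + 7/16 := by rw [he, c312]
      have ha' : a.re = -u.im/4 + 3/8 := by
        rcases hare with ha' | ha'
        · exfalso; rw [hxim, ha'] at hxim'; linarith [hbyi.1, hbui.1]
        · exact ha'
      have hueq : u.im = -y.im/2 - 1/4 := by rw [hxim, ha'] at hxim'; linarith
      obtain ⟨y', hy'A, hy're, hccases⟩ := edgeL3 u huA hure
      obtain ⟨hby'r, hby'i⟩ := bound y' hy'A; rw [abs_le] at hby'r hby'i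
      have hbA : (⟨y.im, -(1/2)⟩ : ℂ) ∈ A := by
        rcases hccases with hc | hc | hc | hc
        · -- u = 112 y' : b = f₁f₂ y'
          have hui : u.im = y'.im/8 - 1/16 := by rw [hc, c112]
          have : (⟨y.im, -(1/2)⟩ : ℂ) = fsq₁ (fsq₂ y') := by
            rw [c12]; apply Complex.ext <;> simp [hy're]
            · rw [hueq] at hui; linarith
            · linarith
          rw [this]; exact m1 _ (m2 _ hy'A)
        · -- u = 123 y' : b = f₂f₃ y'
          have hui : u.im = y'.im/8 - 7/16 := by rw [hc, c123]
          have : (⟨y.im, -(1/2)⟩ : ℂ) = fsq₂ (fsq₃ y') := by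
            rw [c23]; apply Complex.ext <;> simp [hy're]
            · rw [hueq] at hui; linarith
            · linarith
          rw [this]; exact m2 _ (m3 _ hy'A)
        · -- u = 312 y' : impossible
          exfalso
          have hui : u.im = y'.im/8 + 7/16 := by rw [hc, c312]
          rw [hueq] at hui; linarith [hby'i.2, hbyi.1]
        · -- u = 323 y' : forces u.im = 0, y.im = -1/2, corner BL
          have hui : u.im = y'.im/8 + 1/16 := by rw [hc, c323]
          have hyim : y.im = -(1/2) := by
            have h1 : u.im ≥ 0 := by rw [hui]; linarith [hby'i.1]
            have h2 : u.im ≤ 0 := by rw [hueq]; linarith [hbyi.1]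
            rw [hueq] at h1 h2; linarith
          rw [hyim]; exact cornerBL
      exact Or.inl ⟨y, mkB y hyA hbA hyre, he.symm⟩
    · -- case 323 : impossible
      exfalso
      have : x.im = y.im/8 + 1/16 := by rw [he, c323]
      rcases hare with ha' | ha' <;> rw [hxim, ha'] at this <;> linarith [hbyi.1, hbyi.2, hbui.1, hbui.2]
  · -- easy direction
    intro hx
    rcases hx with ⟨y, hyB, he⟩ | ⟨y, hyB, he⟩ <;> rw [hB] at hyB <;>
      obtain ⟨hyA, b, hbA, hby⟩ := hyB <;> rw [hB] <;> refine ⟨?_, ?_⟩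
    · rw [← he]; exact m3 _ (m1 _ (m2 _ hyA))
    · refine ⟨fsq₂ (fsq₃ (fsq₁ b)), m2 _ (m3 _ (m1 _ hbA)), ?_⟩
      rw [← he, ← hby]
      show h (fsq₂ (fsq₃ (fsq₁ b))) = (fsq₃ ∘ fsq₁ ∘ fsq₂) (h b)
      show h (fsq₂ (fsq₃ (fsq₁ b))) = fsq₃ (fsq₁ (fsq₂ (h b)))
      rw [hrep, hrep, c231, c312]
      apply Complex.ext <;> simp <;> ring
    · rw [← he]; exact m1 _ (m2 _ (m3 _ hyA))
    · refine ⟨fsq₁ (fsq₂ (fsq₃ b)), m1 _ (m2 _ (m3 _ hbA)), ?_⟩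
      rw [← he, ← hby]
      show h (fsq₁ (fsq₂ (fsq₃ b))) = (fsq₁ ∘ fsq₂ ∘ fsq₃) (h b)
      show h (fsq₁ (fsq₂ (fsq₃ b))) = fsq₁ (fsq₂ (fsq₃ (h b)))
      rw [hrep, hrep, c123, c123]
      apply Complex.ext <;> simp <;> ring
end
end
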